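/- arXiv:0704.3937 — 6 statements merged into one kernel-verified Lean document; each statement's English description precedes it below -/
import Mathlib

section
/- For every q_0 > 0 there is a constant C = C(q_0) > 0 such that for every sequence of weights (p_n) ⊂ (0,1), every n ≥ 1 and every q ≥ q_0, the second derivative of τ_{μ,n} satisfies 0 ≤ τ_{μ,n}''(q) ≤ C. In particular the functions (τ_{μ,n}'')_n are locally uniformly bounded on (0,∞). -/
open MeasureTheory Filter Set

noncomputable section

/-- The generation-`n` cylinder `I_{ε₁…εₙ} = {x ∈ Σ : x₁ = ε₁, …, xₙ = εₙ}`; the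
collection `F_n` of all `2^n` cylinders of generation `n` is the range of
`ε ↦ cyl ε` over `ε : Fin n → Bool`. -/
def cyl {n : ℕ} (ε : Fin n → Bool) : Set (ℕ → Bool) :=
  {x | ∀ i : Fin n, x (i : ℕ) = ε i}

/-- `μ` is the inhomogeneous Bernoulli product with weights `(pₙ)`: the Borel
probability measure determined by `μ(I_{ε₁…εₙ}) = ∏_{j=1}^n pⱼ^{1-εⱼ} (1-pⱼ)^{εⱼ}`. -/
def IsBernoulliProduct (p : ℕ → ℝ) (μ : Measure (ℕ → Bool)) : Prop :=
  IsProbabilityMeasure μ ∧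
    ∀ (n : ℕ) (ε : Fin n → Bool),
      μ (cyl ε) = ENNReal.ofReal (∏ i : Fin n, if ε i then 1 - p (i : ℕ) else p (i : ℕ))

/-- `τ_{μ,n}(q) = (1/(n log 2)) · log ∑_{I ∈ F_n} μ(I)^q`. -/
def tauN (μ : Measure (ℕ → Bool)) (n : ℕ) (q : ℝ) : ℝ :=
  (1 / (n * Real.log 2)) * Real.log (∑ ε : Fin n → Bool, (μ (cyl ε)).toReal ^ q)

/-- The `L^q`-spectrum `τ_μ(q) = limsup_{n→∞} τ_{μ,n}(q)`. -/
def tauLq (μ : Measure (ℕ → Bool)) (q : ℝ) : ℝ :=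
  limsup (fun n : ℕ => tauN μ n q) atTop

def Dq (a b q : ℝ) : ℝ := a ^ q + b ^ q
def D1q (a b q : ℝ) : ℝ := a ^ q * Real.log a + b ^ q * Real.log b
def D2q (a b q : ℝ) : ℝ := a ^ q * (Real.log a)^2 + b ^ q * (Real.log b)^2
def Gq (a b q : ℝ) : ℝ := D1q a b q / Dq a b q
def G2q (a b q : ℝ) : ℝ := (D2q a b q * Dq a b q - D1q a b q ^ 2) / Dq a b q ^ 2

variable {a b q : ℝ}

lemma Dq_pos (ha : 0 < a) (hb : 0 < b) : 0 < Dq a b q :=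
  add_pos (Real.rpow_pos_of_pos ha q) (Real.rpow_pos_of_pos hb q)

lemma hasDerivAt_Dq (ha : 0 < a) (hb : 0 < b) :
    HasDerivAt (Dq a b) (D1q a b q) q :=
  ((Real.hasStrictDerivAt_const_rpow ha q).hasDerivAt.add
    (Real.hasStrictDerivAt_const_rpow hb q).hasDerivAt)

lemma hasDerivAt_D1q (ha : 0 < a) (hb : 0 < b) :
    HasDerivAt (D1q a b) (D2q a b q) q := by
  have h1 := ((Real.hasStrictDerivAt_const_rpow ha q).hasDerivAt.mul_const (Real.log a))
  have h2 := ((Real.hasStrictDerivAt_const_rpow hb q).hasDerivAt.mul_const (Real.log b))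
  have := h1.add h2
  convert this using 1
  · rfl
  · rfl
  · rfl
  · simp [D2q]; ring

lemma hasDerivAt_logDq (ha : 0 < a) (hb : 0 < b) :
    HasDerivAt (fun q => Real.log (Dq a b q)) (Gq a b q) q :=
  (hasDerivAt_Dq ha hb).log (Dq_pos ha hb).ne'

lemma hasDerivAt_Gq (ha : 0 < a) (hb : 0 < b) :
    HasDerivAt (Gq a b) (G2q a b q) q := by
  have := (hasDerivAt_D1q (q:=q) ha hb).div (hasDerivAt_Dq (q:=q) ha hb) (Dq_pos (q:=q) ha hb).ne'
  convert this using 1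
  · rfl
  · rfl
  · rfl
  · simp [G2q]; ring

lemma G2q_eq (ha : 0 < a) (hb : 0 < b) :
    G2q a b q = a ^ q * b ^ q * (Real.log a - Real.log b)^2 / (a ^ q + b ^ q)^2 := by
  have : D2q a b q * Dq a b q - D1q a b q ^ 2
      = a ^ q * b ^ q * (Real.log a - Real.log b)^2 := by
    simp only [D2q, Dq, D1q]; ring
  rw [G2q, this]; rfl

lemma G2q_nonneg (ha : 0 < a) (hb : 0 < b) : 0 ≤ G2q a b q := by
  rw [G2q_eq ha hb]
  positivity

-- key: for 0 < r ≤ 1, 0 < q:  r^q * (log r)^2 ≤ 4/q^2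
lemma key (r : ℝ) (hr : 0 < r) (hr1 : r ≤ 1) (hq : 0 < q) :
    r ^ q * (Real.log r)^2 ≤ 4 / q ^ 2 := by
  have h := Real.abs_log_mul_self_rpow_lt r (q/2) hr hr1 (by positivity)
  have h2 : (Real.log r * r ^ (q/2))^2 ≤ (1 / (q/2))^2 := by
    have := abs_nonneg (Real.log r * r ^ (q/2))
    nlinarith [sq_abs (Real.log r * r ^ (q/2))]
  have hs : (r ^ (q/2))^2 = r ^ q := by
    rw [← Real.rpow_natCast (r ^ (q/2)) 2, ← Real.rpow_mul hr.le]
    norm_num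
  calc r ^ q * (Real.log r)^2 = (Real.log r * r ^ (q/2))^2 := by rw [mul_pow, hs]; ring
    _ ≤ (1 / (q/2))^2 := h2
    _ = 4 / q ^ 2 := by field_simp; ring

lemma G2q_le_aux (ha : 0 < a) (hb : 0 < b) (hab : a ≤ b) (hq : 0 < q) :
    G2q a b q ≤ 4 / q ^ 2 := by
  rw [G2q_eq ha hb]
  have hxq := Real.rpow_pos_of_pos ha q
  have hyq := Real.rpow_pos_of_pos hb q
  have h1 : a ^ q * b ^ q * (Real.log a - Real.log b)^2 / (a ^ q + b ^ q)^2
      ≤ (a/b) ^ q * (Real.log (a/b))^2 := by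
    rw [Real.div_rpow ha.le hb.le, Real.log_div ha.ne' hb.ne']
    rw [div_le_iff₀ (by positivity)]
    have : a ^ q / b ^ q * (Real.log a - Real.log b)^2 * (a ^ q + b ^ q)^2
        = (a ^ q * (a ^ q + b ^ q)^2 / b ^ q) * (Real.log a - Real.log b)^2 := by ring
    rw [this]
    have h2 : a ^ q * b ^ q ≤ a ^ q * (a ^ q + b ^ q)^2 / b ^ q := by
      rw [le_div_iff₀ hyq]
      have : (b^q)^2 ≤ (a^q + b^q)^2 := by nlinarith
      nlinarith
    nlinarith [sq_nonneg (Real.log a - Real.log b)]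
  refine h1.trans (key _ (by positivity) ?_ hq)
  exact div_le_one_of_le₀ hab hb.le

lemma G2q_le (ha : 0 < a) (hb : 0 < b) (hq : 0 < q) :
    G2q a b q ≤ 4 / q ^ 2 := by
  rcases le_total a b with h | h
  · exact G2q_le_aux ha hb h hq
  · have : G2q a b q = G2q b a q := by
      simp only [G2q, Dq, D1q, D2q]; ring_nf
    rw [this]; exact G2q_le_aux hb ha h hq

lemma tauN_eq (p : ℕ → ℝ) (hp : ∀ k, p k ∈ Set.Ioo (0:ℝ) 1)
    (μ : Measure (ℕ → Bool)) (hμ : IsBernoulliProduct p μ) (n : ℕ) :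
    tauN μ n = fun q => (1 / (n * Real.log 2)) *
      ∑ i : Fin n, Real.log (Dq (p (i:ℕ)) (1 - p (i:ℕ)) q) := by
  funext q
  unfold tauN
  congr 1
  have hw : ∀ (i : Fin n) (b : Bool), 0 < (if b then 1 - p (i:ℕ) else p (i:ℕ)) := by
    intro i b
    cases b <;> simp [(hp i).1, sub_pos.mpr (hp (i:ℕ)).2]
  have step1 : ∑ ε : Fin n → Bool, (μ (cyl ε)).toReal ^ q
      = ∑ ε : Fin n → Bool, ∏ i : Fin n, (if ε i then 1 - p (i:ℕ) else p (i:ℕ)) ^ q := by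
    refine Finset.sum_congr rfl fun ε _ => ?_
    rw [hμ.2 n ε, ENNReal.toReal_ofReal
      (Finset.prod_nonneg fun i _ => (hw i (ε i)).le),
      Real.finset_prod_rpow _ _ (fun i _ => (hw i (ε i)).le) q]
  have step2 : ∑ ε : Fin n → Bool, ∏ i : Fin n, (if ε i then 1 - p (i:ℕ) else p (i:ℕ)) ^ q
      = ∏ i : Fin n, ∑ b : Bool, (if b then 1 - p (i:ℕ) else p (i:ℕ)) ^ q := by
    rw [Finset.prod_univ_sum, Fintype.piFinset_univ]
  rw [step1, step2, Real.log_prod (fun i _ => ?_)]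
  · refine Finset.sum_congr rfl fun i _ => ?_
    congr 1
    simp [Dq, Fintype.sum_bool, add_comm]
  · have h2 : (0:ℝ) < p (i:ℕ) := (hp (i:ℕ)).1
    have h1 : (0:ℝ) < 1 - p (i:ℕ) := sub_pos.mpr (hp (i:ℕ)).2
    have hgt : (0:ℝ) < ∑ b : Bool, (if b then 1 - p (i:ℕ) else p (i:ℕ)) ^ q := by
      rw [Fintype.sum_bool]
      simp only [if_true]
      positivity
    exact hgt.ne'

/-- Lemma 2.1. For every `q₀ > 0` there is a constant `C = C(q₀) > 0`
such that for every sequence of weights `(pₙ) ⊂ (0,1)`, every `n ≥ 1` and every `q ≥ q₀`,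
the second derivative of `τ_{μ,n}` satisfies `0 ≤ τ_{μ,n}''(q) ≤ C`. In particular the
functions `(τ_{μ,n}'')ₙ` are locally uniformly bounded on `(0,∞)`. -/
theorem statement4 (q₀ : ℝ) (hq₀ : 0 < q₀) :
    ∃ C : ℝ, 0 < C ∧
      ∀ (p : ℕ → ℝ), (∀ k, p k ∈ Set.Ioo (0 : ℝ) 1) →
        ∀ (μ : Measure (ℕ → Bool)), IsBernoulliProduct p μ →
          ∀ n : ℕ, 1 ≤ n → ∀ q : ℝ, q₀ ≤ q →
            0 ≤ iteratedDeriv 2 (tauN μ n) q ∧ iteratedDeriv 2 (tauN μ n) q ≤ C := by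
  have hlog2 : 0 < Real.log 2 := Real.log_pos one_lt_two
  refine ⟨4 / (q₀ ^ 2 * Real.log 2), by positivity, ?_⟩
  intro p hp μ hμ n hn q hq
  have hq' : 0 < q := lt_of_lt_of_le hq₀ hq
  have hn0 : (n : ℝ) ≠ 0 := Nat.cast_ne_zero.mpr (by omega)
  set c : ℝ := 1 / (n * Real.log 2) with hc
  have hcpos : 0 < c := by positivity
  have ha : ∀ i : Fin n, 0 < p (i:ℕ) := fun i => (hp (i:ℕ)).1
  have hb : ∀ i : Fin n, 0 < 1 - p (i:ℕ) := fun i => sub_pos.mpr (hp (i:ℕ)).2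
  have hf := tauN_eq p hp μ hμ n
  have hderiv : ∀ x : ℝ, HasDerivAt (tauN μ n)
      (c * ∑ i : Fin n, Gq (p (i:ℕ)) (1 - p (i:ℕ)) x) x := by
    intro x
    rw [hf]
    exact (HasDerivAt.fun_sum fun i _ => hasDerivAt_logDq (ha i) (hb i)).const_mul c
  have hd1 : deriv (tauN μ n)
      = fun x => c * ∑ i : Fin n, Gq (p (i:ℕ)) (1 - p (i:ℕ)) x :=
    funext fun x => (hderiv x).deriv
  have hderiv2 : HasDerivAt (fun x => c * ∑ i : Fin n, Gq (p (i:ℕ)) (1 - p (i:ℕ)) x)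
      (c * ∑ i : Fin n, G2q (p (i:ℕ)) (1 - p (i:ℕ)) q) q :=
    (HasDerivAt.fun_sum fun i _ => hasDerivAt_Gq (ha i) (hb i)).const_mul c
  have hiter : iteratedDeriv 2 (tauN μ n) q
      = c * ∑ i : Fin n, G2q (p (i:ℕ)) (1 - p (i:ℕ)) q := by
    rw [show (2:ℕ) = 1 + 1 from rfl, iteratedDeriv_succ, iteratedDeriv_one, hd1]
    exact hderiv2.deriv
  rw [hiter]
  constructor
  · exact mul_nonneg hcpos.le (Finset.sum_nonneg fun i _ => G2q_nonneg (ha i) (hb i))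
  · have hsum : ∑ i : Fin n, G2q (p (i:ℕ)) (1 - p (i:ℕ)) q ≤ n * (4 / q₀ ^ 2) := by
      calc ∑ i : Fin n, G2q (p (i:ℕ)) (1 - p (i:ℕ)) q
          ≤ ∑ _i : Fin n, 4 / q₀ ^ 2 := by
            refine Finset.sum_le_sum fun i _ => ?_
            refine (G2q_le (ha i) (hb i) hq').trans ?_
            gcongr
        _ = n * (4 / q₀ ^ 2) := by simp [Finset.sum_const, mul_comm]
    calc c * ∑ i : Fin n, G2q (p (i:ℕ)) (1 - p (i:ℕ)) q
        ≤ c * (n * (4 / q₀ ^ 2)) := by gcongr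
      _ = 4 / (q₀ ^ 2 * Real.log 2) := by rw [hc]; field_simp
end
end

section
/- For p ∈ (0,1) let g_p(q) = log(p^q + (1-p)^q). Then for all q ∈ ℝ, g_p''(q) = p^q (1-p)^q (log(p/(1-p)))^2 / (p^q + (1-p)^q)^2. Moreover, for every q_0 > 0, sup{ g_p''(q) : p ∈ (0,1), q ≥ q_0 } < ∞; indeed for p ∈ (0,1/2] and q ≥ q_0 one has g_p''(q) ≤ (4p(1-p))^{q_0} (log p)^2. -/
open MeasureTheory Filter Set

noncomputable section

/-- `g_p(q) = log(p^q + (1-p)^q)` (natural logarithm, real powers). -/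
def gfun (p : ℝ) : ℝ → ℝ := fun q => Real.log (p ^ q + (1 - p) ^ q)

lemma gderiv1 {p : ℝ} (hp : 0 < p) (hp1 : p < 1) :
    deriv (gfun p) = fun q =>
      (p ^ q * Real.log p + (1 - p) ^ q * Real.log (1 - p)) / (p ^ q + (1 - p) ^ q) := by
  have h1p : (0:ℝ) < 1 - p := by linarith
  funext q
  have hA : (0:ℝ) < p ^ q := Real.rpow_pos_of_pos hp q
  have hB : (0:ℝ) < (1 - p) ^ q := Real.rpow_pos_of_pos h1p q
  have h := (((Real.hasStrictDerivAt_const_rpow hp q).hasDerivAt.add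
      (Real.hasStrictDerivAt_const_rpow h1p q).hasDerivAt).log (add_pos hA hB).ne')
  exact h.deriv

lemma gderiv2 {p : ℝ} (hp : 0 < p) (hp1 : p < 1) (q : ℝ) :
    iteratedDeriv 2 (gfun p) q
      = p ^ q * (1 - p) ^ q * Real.log (p / (1 - p)) ^ 2
          / (p ^ q + (1 - p) ^ q) ^ 2 := by
  have h1p : (0:ℝ) < 1 - p := by linarith
  have hA : (0:ℝ) < p ^ q := Real.rpow_pos_of_pos hp q
  have hB : (0:ℝ) < (1 - p) ^ q := Real.rpow_pos_of_pos h1p q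
  have hD : (0:ℝ) < p ^ q + (1 - p) ^ q := by positivity
  have hNa : HasDerivAt (fun x => p ^ x * Real.log p + (1 - p) ^ x * Real.log (1 - p))
      (p ^ q * Real.log p * Real.log p + (1 - p) ^ q * Real.log (1 - p) * Real.log (1 - p)) q :=
    (((Real.hasStrictDerivAt_const_rpow hp q).hasDerivAt.mul_const (Real.log p)).add
      ((Real.hasStrictDerivAt_const_rpow h1p q).hasDerivAt.mul_const (Real.log (1 - p))))
  have hDa : HasDerivAt (fun x => p ^ x + (1 - p) ^ x)
      (p ^ q * Real.log p + (1 - p) ^ q * Real.log (1 - p)) q :=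
    (Real.hasStrictDerivAt_const_rpow hp q).hasDerivAt.add
      (Real.hasStrictDerivAt_const_rpow h1p q).hasDerivAt
  have h2 := hNa.div hDa (ne_of_gt hD)
  rw [iteratedDeriv_succ, iteratedDeriv_one, gderiv1 hp hp1]
  rw [show deriv (fun q => (p ^ q * Real.log p + (1 - p) ^ q * Real.log (1 - p)) / (p ^ q + (1 - p) ^ q)) q = _ from h2.deriv]
  rw [Real.log_div (ne_of_gt hp) (ne_of_gt h1p)]
  rw [div_eq_div_iff (by positivity) (by positivity)]
  ring

/-- key quotient bound -/
lemma key_bound {a b q₀ q : ℝ} (ha : 0 < a) (hab : a ≤ b) (hq₀ : 0 < q₀) (hq : q₀ ≤ q) :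
    a ^ q * b ^ q * (Real.log a - Real.log b) ^ 2 / (a ^ q + b ^ q) ^ 2
      ≤ (a / b) ^ q₀ * (Real.log a - Real.log b) ^ 2 := by
  have hb : (0:ℝ) < b := lt_of_lt_of_le ha hab
  have hA : (0:ℝ) < a ^ q := Real.rpow_pos_of_pos ha q
  have hB : (0:ℝ) < b ^ q := Real.rpow_pos_of_pos hb q
  have h1 : a ^ q * b ^ q * (Real.log a - Real.log b) ^ 2 / (a ^ q + b ^ q) ^ 2
      ≤ a ^ q * b ^ q * (Real.log a - Real.log b) ^ 2 / (b ^ q) ^ 2 := by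
    apply div_le_div_of_nonneg_left (by positivity) (by positivity)
    have : b ^ q ≤ a ^ q + b ^ q := by linarith
    exact pow_le_pow_left₀ (le_of_lt hB) this 2
  have h2 : a ^ q * b ^ q * (Real.log a - Real.log b) ^ 2 / (b ^ q) ^ 2
      = (a / b) ^ q * (Real.log a - Real.log b) ^ 2 := by
    rw [Real.div_rpow (le_of_lt ha) (le_of_lt hb)]
    field_simp
  have h3 : (a / b) ^ q ≤ (a / b) ^ q₀ :=
    Real.rpow_le_rpow_of_exponent_ge (by positivity)
      ((div_le_one hb).mpr hab) hq
  calc a ^ q * b ^ q * (Real.log a - Real.log b) ^ 2 / (a ^ q + b ^ q) ^ 2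
      ≤ (a / b) ^ q * (Real.log a - Real.log b) ^ 2 := h1.trans_eq h2
    _ ≤ (a / b) ^ q₀ * (Real.log a - Real.log b) ^ 2 :=
        mul_le_mul_of_nonneg_right h3 (sq_nonneg _)

/-- `t^c * (log t)^2 ≤ 4 / c²` for `t ∈ (0,1]`, `c > 0`. -/
lemma tlog_bound {t c : ℝ} (ht : 0 < t) (ht1 : t ≤ 1) (hc : 0 < c) :
    t ^ c * Real.log t ^ 2 ≤ 4 / c ^ 2 := by
  set s : ℝ := -Real.log t with hs
  have hs0 : 0 ≤ s := by
    simp only [hs, neg_nonneg]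
    exact Real.log_nonpos (le_of_lt ht) ht1
  have htc : t ^ c = Real.exp (-(c * s)) := by
    rw [hs, Real.rpow_def_of_pos ht]; ring_nf
  have hlog2 : Real.log t ^ 2 = s ^ 2 := by rw [hs]; ring
  rw [htc, hlog2]
  have hexp : (c * s) ^ 2 / 4 ≤ Real.exp (c * s) := by
    have h1 : 1 + c * s / 2 ≤ Real.exp (c * s / 2) := by
      linarith [Real.add_one_le_exp (c * s / 2)]
    have h2 : Real.exp (c * s) = Real.exp (c * s / 2) ^ 2 := by
      rw [← Real.exp_nat_mul]; ring_nf
    have hcs : 0 ≤ c * s := by positivity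
    have h3 : (1 + c * s / 2) * (1 + c * s / 2) ≤ Real.exp (c * s / 2) * Real.exp (c * s / 2) :=
      mul_le_mul h1 h1 (by positivity) (Real.exp_pos _).le
    nlinarith [h3, hcs]
  have hc' : c ≠ 0 := ne_of_gt hc
  have key : s ^ 2 = (c * s) ^ 2 / 4 * (4 / c ^ 2) := by field_simp
  calc Real.exp (-(c * s)) * s ^ 2 = s ^ 2 / Real.exp (c * s) := by
        rw [Real.exp_neg]; ring
    _ ≤ 4 / c ^ 2 := by
        rw [div_le_iff₀ (Real.exp_pos _), key, mul_comm (4 / c ^ 2)]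
        exact mul_le_mul_of_nonneg_right hexp (by positivity)

/-- computations in the proof of Lemma 2.1. For `p ∈ (0,1)` and all
`q`, `g_p''(q) = p^q (1-p)^q (log(p/(1-p)))² / (p^q + (1-p)^q)²`. Moreover, for every
`q₀ > 0` the quantities `g_p''(q)`, `p ∈ (0,1)`, `q ≥ q₀`, are bounded above; indeed for
`p ∈ (0,1/2]` and `q ≥ q₀` one has `g_p''(q) ≤ (4p(1-p))^{q₀} (log p)²`. -/
theorem statement6 :
    (∀ p ∈ Set.Ioo (0 : ℝ) 1, ∀ q : ℝ,
        iteratedDeriv 2 (gfun p) q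
          = p ^ q * (1 - p) ^ q * Real.log (p / (1 - p)) ^ 2
              / (p ^ q + (1 - p) ^ q) ^ 2)
      ∧ (∀ q₀ : ℝ, 0 < q₀ →
          ∃ M : ℝ, ∀ p ∈ Set.Ioo (0 : ℝ) 1, ∀ q : ℝ, q₀ ≤ q →
            iteratedDeriv 2 (gfun p) q ≤ M)
      ∧ ∀ q₀ : ℝ, 0 < q₀ → ∀ p : ℝ, 0 < p → p ≤ 1 / 2 → ∀ q : ℝ, q₀ ≤ q →
          iteratedDeriv 2 (gfun p) q ≤ (4 * p * (1 - p)) ^ q₀ * Real.log p ^ 2 := by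
  refine ⟨fun p hp q => gderiv2 hp.1 hp.2 q, ?_, ?_⟩
  · intro q₀ hq₀
    refine ⟨4 / q₀ ^ 2, fun p hp q hq => ?_⟩
    obtain ⟨hp0, hp1⟩ := hp
    have h1p : (0:ℝ) < 1 - p := by linarith
    rw [gderiv2 hp0 hp1 q, Real.log_div (ne_of_gt hp0) (ne_of_gt h1p)]
    rcases le_total p (1 - p) with h | h
    · calc p ^ q * (1 - p) ^ q * (Real.log p - Real.log (1 - p)) ^ 2 / (p ^ q + (1 - p) ^ q) ^ 2
          ≤ (p / (1 - p)) ^ q₀ * (Real.log p - Real.log (1 - p)) ^ 2 :=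
            key_bound hp0 h hq₀ hq
        _ = (p / (1 - p)) ^ q₀ * Real.log (p / (1 - p)) ^ 2 := by
            rw [Real.log_div (ne_of_gt hp0) (ne_of_gt h1p)]
        _ ≤ 4 / q₀ ^ 2 :=
            tlog_bound (by positivity) ((div_le_one h1p).mpr h) hq₀
    · have key := key_bound h1p h hq₀ hq
      calc p ^ q * (1 - p) ^ q * (Real.log p - Real.log (1 - p)) ^ 2 / (p ^ q + (1 - p) ^ q) ^ 2
          = (1 - p) ^ q * p ^ q * (Real.log (1 - p) - Real.log p) ^ 2
              / ((1 - p) ^ q + p ^ q) ^ 2 := by ring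
        _ ≤ ((1 - p) / p) ^ q₀ * (Real.log (1 - p) - Real.log p) ^ 2 := key
        _ = ((1 - p) / p) ^ q₀ * Real.log ((1 - p) / p) ^ 2 := by
            rw [Real.log_div (ne_of_gt h1p) (ne_of_gt hp0)]
        _ ≤ 4 / q₀ ^ 2 :=
            tlog_bound (by positivity) ((div_le_one hp0).mpr h) hq₀
  · intro q₀ hq₀ p hp0 hp2 q hq
    have hp1 : p < 1 := by linarith
    have h1p : (0:ℝ) < 1 - p := by linarith
    have hb : (1:ℝ)/2 ≤ 1 - p := by linarith
    have hab : p ≤ 1 - p := by linarith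
    rw [gderiv2 hp0 hp1 q, Real.log_div (ne_of_gt hp0) (ne_of_gt h1p)]
    have step1 : p ^ q * (1 - p) ^ q * (Real.log p - Real.log (1 - p)) ^ 2
        / (p ^ q + (1 - p) ^ q) ^ 2
        ≤ (p / (1 - p)) ^ q₀ * (Real.log p - Real.log (1 - p)) ^ 2 :=
      key_bound hp0 hab hq₀ hq
    have step2 : (Real.log p - Real.log (1 - p)) ^ 2 ≤ Real.log p ^ 2 := by
      have hlp : Real.log p ≤ 0 := Real.log_nonpos (le_of_lt hp0) (le_of_lt hp1)
      have hlb : Real.log (1 - p) ≤ 0 := Real.log_nonpos (le_of_lt h1p) (by linarith)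
      have hlab : Real.log p ≤ Real.log (1 - p) := Real.log_le_log hp0 hab
      have h1 : Real.log p ≤ Real.log p - Real.log (1 - p) := by linarith
      have h2 : Real.log p - Real.log (1 - p) ≤ -(Real.log p) := by linarith
      have := sq_le_sq' (by linarith : -(-Real.log p) ≤ Real.log p - Real.log (1 - p)) h2
      simpa [neg_sq] using this
    have step3 : (p / (1 - p)) ^ q₀ ≤ (4 * p * (1 - p)) ^ q₀ := by
      apply Real.rpow_le_rpow (by positivity) _ (le_of_lt hq₀)
      rw [div_le_iff₀ h1p]
      have h4 : (0:ℝ) ≤ 4 * (1 - p) ^ 2 - 1 := by nlinarith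
      nlinarith [mul_nonneg hp0.le h4]
    calc p ^ q * (1 - p) ^ q * (Real.log p - Real.log (1 - p)) ^ 2
        / (p ^ q + (1 - p) ^ q) ^ 2
        ≤ (p / (1 - p)) ^ q₀ * (Real.log p - Real.log (1 - p)) ^ 2 := step1
      _ ≤ (p / (1 - p)) ^ q₀ * Real.log p ^ 2 :=
          mul_le_mul_of_nonneg_left step2 (by positivity)
      _ ≤ (4 * p * (1 - p)) ^ q₀ * Real.log p ^ 2 :=
          mul_le_mul_of_nonneg_right step3 (sq_nonneg _)
end
end

section
/- Let μ be an inhomogeneous Bernoulli product on Σ with weights (p_n) ⊂ (0,1), let q ∈ ℝ, and let ν be the inhomogeneous Bernoulli product with weights p_n' = p_n^q/(p_n^q + (1-p_n)^q) (the Gibbs measure associated to μ and q). Then for every n ≥ 1 and every s ∈ ℝ, τ_{ν,n}(s) = τ_{μ,n}(qs) − s·τ_{μ,n}(q). -/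
open MeasureTheory Filter Set

noncomputable section

lemma sum_rpow_eq (r : ℕ → ℝ) (hr : ∀ k, r k ∈ Set.Ioo (0 : ℝ) 1)
    (m : Measure (ℕ → Bool)) (hm : IsBernoulliProduct r m) (n : ℕ) (t : ℝ) :
    ∑ ε : Fin n → Bool, (m (cyl ε)).toReal ^ t
      = ∏ i : Fin n, (r (i : ℕ) ^ t + (1 - r (i : ℕ)) ^ t) := by
  have hfac : ∀ (i : Fin n) (b : Bool), (0 : ℝ) ≤ if b then 1 - r (i : ℕ) else r (i : ℕ) := by
    intro i b
    have := hr (i : ℕ)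
    cases b <;> simp <;> linarith [this.1, this.2]
  have h1 : ∀ ε : Fin n → Bool,
      (m (cyl ε)).toReal ^ t = ∏ i : Fin n, (if ε i then 1 - r (i : ℕ) else r (i : ℕ)) ^ t := by
    intro ε
    rw [hm.2 n ε, ENNReal.toReal_ofReal (Finset.prod_nonneg fun i _ => hfac i (ε i)),
      ← Real.finset_prod_rpow _ _ (fun i _ => hfac i (ε i))]
  calc ∑ ε : Fin n → Bool, (m (cyl ε)).toReal ^ t
      = ∑ ε : Fin n → Bool, ∏ i : Fin n,
          (if ε i then (1 - r (i : ℕ)) ^ t else r (i : ℕ) ^ t) := by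
        refine Finset.sum_congr rfl fun ε _ => ?_
        rw [h1 ε]
        exact Finset.prod_congr rfl fun i _ => by rw [apply_ite (· ^ t)]
    _ = ∏ i : Fin n, ∑ b : Bool, (if b then (1 - r (i : ℕ)) ^ t else r (i : ℕ) ^ t) := by
        rw [Finset.prod_univ_sum]
        rw [Fintype.piFinset_univ]
    _ = ∏ i : Fin n, (r (i : ℕ) ^ t + (1 - r (i : ℕ)) ^ t) := by
        refine Finset.prod_congr rfl fun i _ => ?_
        simp [Fintype.sum_bool, add_comm]

/-- Let `μ` be an inhomogeneous Bernoulli product with weights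
`(pₙ) ⊂ (0,1)`, `q ∈ ℝ`, and let `ν` be the inhomogeneous Bernoulli product with weights
`pₙ' = pₙ^q/(pₙ^q + (1-pₙ)^q)` (the Gibbs measure associated to `μ` and `q`). Then for
every `n ≥ 1` and every `s ∈ ℝ`, `τ_{ν,n}(s) = τ_{μ,n}(qs) - s·τ_{μ,n}(q)`. -/
theorem statement8
    (p : ℕ → ℝ) (hp : ∀ k, p k ∈ Set.Ioo (0 : ℝ) 1)
    (μ : Measure (ℕ → Bool)) (hμ : IsBernoulliProduct p μ) (q : ℝ)
    (ν : Measure (ℕ → Bool))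
    (hν : IsBernoulliProduct (fun k => p k ^ q / (p k ^ q + (1 - p k) ^ q)) ν) :
    ∀ n : ℕ, 1 ≤ n → ∀ s : ℝ, tauN ν n s = tauN μ n (q * s) - s * tauN μ n q := by
  intro n hn s
  set P : ℝ → ℝ := fun t => ∏ i : Fin n, (p (i : ℕ) ^ t + (1 - p (i : ℕ)) ^ t) with hP
  have hppos : ∀ k, 0 < p k := fun k => (hp k).1
  have hqpos : ∀ k, 0 < 1 - p k := fun k => by linarith [(hp k).2]
  have hPpos : ∀ t, 0 < P t := by
    intro t
    exact Finset.prod_pos fun i _ =>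
      add_pos (Real.rpow_pos_of_pos (hppos _) _) (Real.rpow_pos_of_pos (hqpos _) _)
  have hμsum : ∀ t, ∑ ε : Fin n → Bool, (μ (cyl ε)).toReal ^ t = P t :=
    fun t => sum_rpow_eq p hp μ hμ n t
  -- the Gibbs weights are in (0,1)
  have hZ : ∀ k, 0 < p k ^ q + (1 - p k) ^ q := fun k =>
    add_pos (Real.rpow_pos_of_pos (hppos _) _) (Real.rpow_pos_of_pos (hqpos _) _)
  have hp' : ∀ k, (p k ^ q / (p k ^ q + (1 - p k) ^ q)) ∈ Set.Ioo (0 : ℝ) 1 := by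
    intro k
    constructor
    · exact div_pos (Real.rpow_pos_of_pos (hppos _) _) (hZ k)
    · rw [div_lt_one (hZ k)]
      nlinarith [Real.rpow_pos_of_pos (hqpos k) q]
  have hνsum : ∑ ε : Fin n → Bool, (ν (cyl ε)).toReal ^ s = P (q * s) / P q ^ s := by
    rw [sum_rpow_eq _ hp' ν hν n s]
    have : ∀ i : Fin n,
        (p (i:ℕ) ^ q / (p (i:ℕ) ^ q + (1 - p (i:ℕ)) ^ q)) ^ s
          + (1 - p (i:ℕ) ^ q / (p (i:ℕ) ^ q + (1 - p (i:ℕ)) ^ q)) ^ s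
        = (p (i:ℕ) ^ (q*s) + (1 - p (i:ℕ)) ^ (q*s)) / (p (i:ℕ) ^ q + (1 - p (i:ℕ)) ^ q) ^ s := by
      intro i
      set k := (i : ℕ)
      have hZk := hZ k
      have h1 : 1 - p k ^ q / (p k ^ q + (1 - p k) ^ q)
          = (1 - p k) ^ q / (p k ^ q + (1 - p k) ^ q) := by
        field_simp
        ring
      rw [h1, Real.div_rpow (Real.rpow_nonneg (hppos k).le q) hZk.le,
        Real.div_rpow (Real.rpow_nonneg (hqpos k).le q) hZk.le,
        ← Real.rpow_mul (hppos k).le, ← Real.rpow_mul (hqpos k).le, ← add_div]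
    rw [Finset.prod_congr rfl fun i _ => this i, Finset.prod_div_distrib,
      Real.finset_prod_rpow Finset.univ (fun i : Fin n => p (i:ℕ) ^ q + (1 - p (i:ℕ)) ^ q)
        (fun i _ => (hZ (i:ℕ)).le)]
  have hlog : Real.log (∑ ε : Fin n → Bool, (ν (cyl ε)).toReal ^ s)
      = Real.log (P (q * s)) - s * Real.log (P q) := by
    rw [hνsum, Real.log_div (hPpos (q*s)).ne' (Real.rpow_pos_of_pos (hPpos q) s).ne',
      Real.log_rpow (hPpos q)]
  unfold tauN
  rw [hlog, hμsum, hμsum]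
  ring
end
end

section
/- Let μ be an inhomogeneous Bernoulli product on Σ with weights (p_n) ⊂ (0,1), let q > 0, and let (n_k) be a subsequence such that τ_{μ,n_k}(q) → τ_μ(q) = limsup_n τ_{μ,n}(q) as k → ∞. If τ_μ is differentiable at q, then lim_{k→∞} τ_{μ,n_k}'(q) = τ_μ'(q). -/
open MeasureTheory Filter Set

open Topology

noncomputable section

/-- log-sum of powers is convex (times a nonneg constant). -/
lemma aux_convex {ι : Type*} [Fintype ι] [Nonempty ι] {a : ι → ℝ} (ha : ∀ i, 0 < a i)
    {c : ℝ} (hc : 0 ≤ c) :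
    ConvexOn ℝ Set.univ (fun x : ℝ => c * Real.log (∑ i, a i ^ x)) := by
  have Spos : ∀ z : ℝ, 0 < ∑ i, a i ^ z := fun z =>
    Finset.sum_pos (fun i _ => Real.rpow_pos_of_pos (ha i) z) Finset.univ_nonempty
  refine ⟨convex_univ, ?_⟩
  intro x _ y _ t s ht hs hts
  simp only [smul_eq_mul]
  rcases eq_or_lt_of_le ht with h0 | htpos
  · have hs1 : s = 1 := by linarith
    subst hs1; rw [← h0]; simp
  rcases eq_or_lt_of_le hs with h0 | hspos
  · have ht1 : t = 1 := by linarith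
    subst ht1; rw [← h0]; simp
  have ht1 : t < 1 := by linarith
  have key : ∑ i, a i ^ (t * x + s * y) ≤ (∑ i, a i ^ x) ^ t * (∑ i, a i ^ y) ^ s := by
    have hpq : Real.HolderConjugate (1 / t) (1 / s) := by
      rw [Real.holderConjugate_iff]
      constructor
      · exact one_lt_one_div htpos ht1
      · rw [one_div, inv_inv, one_div, inv_inv]; exact hts
    have H := Real.inner_le_Lp_mul_Lq_of_nonneg (s := Finset.univ) hpq
      (f := fun i => a i ^ (t * x)) (g := fun i => a i ^ (s * y))
      (fun i _ => (Real.rpow_pos_of_pos (ha i) _).le)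
      (fun i _ => (Real.rpow_pos_of_pos (ha i) _).le)
    calc ∑ i, a i ^ (t * x + s * y) = ∑ i, a i ^ (t * x) * a i ^ (s * y) := by
          exact Finset.sum_congr rfl fun i _ => Real.rpow_add (ha i) _ _
      _ ≤ (∑ i, (a i ^ (t * x)) ^ (1 / t)) ^ (1 / (1 / t)) *
            (∑ i, (a i ^ (s * y)) ^ (1 / s)) ^ (1 / (1 / s)) := H
      _ = (∑ i, a i ^ x) ^ t * (∑ i, a i ^ y) ^ s := by
          rw [one_div_one_div, one_div_one_div]
          congr 2 <;> refine Finset.sum_congr rfl fun i _ => ?_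
          · rw [← Real.rpow_mul (ha i).le]
            congr 1
            field_simp
          · rw [← Real.rpow_mul (ha i).le]
            congr 1
            field_simp
  have hlog : Real.log (∑ i, a i ^ (t * x + s * y)) ≤
      t * Real.log (∑ i, a i ^ x) + s * Real.log (∑ i, a i ^ y) := by
    calc Real.log (∑ i, a i ^ (t * x + s * y))
        ≤ Real.log ((∑ i, a i ^ x) ^ t * (∑ i, a i ^ y) ^ s) := Real.log_le_log (Spos _) key
      _ = t * Real.log (∑ i, a i ^ x) + s * Real.log (∑ i, a i ^ y) := by
          rw [Real.log_mul (Real.rpow_pos_of_pos (Spos x) t).ne'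
            (Real.rpow_pos_of_pos (Spos y) s).ne', Real.log_rpow (Spos x), Real.log_rpow (Spos y)]
  calc c * Real.log (∑ i, a i ^ (t * x + s * y))
      ≤ c * (t * Real.log (∑ i, a i ^ x) + s * Real.log (∑ i, a i ^ y)) :=
        mul_le_mul_of_nonneg_left hlog hc
    _ = t * (c * Real.log (∑ i, a i ^ x)) + s * (c * Real.log (∑ i, a i ^ y)) := by ring

lemma aux_hasDerivAt {ι : Type*} [Fintype ι] [Nonempty ι] {a : ι → ℝ} (ha : ∀ i, 0 < a i)
    (c x : ℝ) : ∃ d, HasDerivAt (fun z : ℝ => c * Real.log (∑ i, a i ^ z)) d x := by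
  have Spos : (0:ℝ) < ∑ i, a i ^ x :=
    Finset.sum_pos (fun i _ => Real.rpow_pos_of_pos (ha i) x) Finset.univ_nonempty
  have hS : HasDerivAt (fun z : ℝ => ∑ i, a i ^ z) (∑ i, a i ^ x * Real.log (a i)) x :=
    HasDerivAt.fun_sum fun i _ => (Real.hasStrictDerivAt_const_rpow (ha i) x).hasDerivAt
  exact ⟨_, (hS.log Spos.ne').const_mul c⟩

/-- Proposition 3.1. Let `μ` be an inhomogeneous Bernoulli product
with weights `(pₙ) ⊂ (0,1)`, `q > 0`, and let `(n_k)` be a (strictly increasing)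
subsequence such that `τ_{μ,n_k}(q) → τ_μ(q) = limsup_n τ_{μ,n}(q)`. If `τ_μ` is
differentiable at `q` then `τ_{μ,n_k}'(q) → τ_μ'(q)`. -/
theorem statement11
    (p : ℕ → ℝ) (hp : ∀ k, p k ∈ Set.Ioo (0 : ℝ) 1)
    (μ : Measure (ℕ → Bool)) (hμ : IsBernoulliProduct p μ)
    (q : ℝ) (hq : 0 < q)
    (φ : ℕ → ℕ) (hφ : StrictMono φ)
    (hconv : Tendsto (fun k : ℕ => tauN μ (φ k) q) atTop (nhds (tauLq μ q)))
    (τ' : ℝ) (hτ' : HasDerivAt (tauLq μ) τ' q) :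
    Tendsto (fun k : ℕ => deriv (tauN μ (φ k)) q) atTop (nhds τ') := by
  have hlog2 : (0:ℝ) < Real.log 2 := Real.log_pos (by norm_num)
  -- the cylinder masses
  have ha : ∀ (n : ℕ) (ε : Fin n → Bool), 0 < (μ (cyl ε)).toReal ∧ (μ (cyl ε)).toReal ≤ 1 := by
    intro n ε
    have hfac : ∀ i : Fin n, 0 < (if ε i then 1 - p (i:ℕ) else p (i:ℕ)) ∧
        (if ε i then 1 - p (i:ℕ) else p (i:ℕ)) ≤ 1 := by
      intro i
      have h1 := (hp i).1; have h2 := (hp i).2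
      cases ε i <;> simp <;> constructor <;> linarith
    have hPpos : 0 < ∏ i : Fin n, (if ε i then 1 - p (i:ℕ) else p (i:ℕ)) :=
      Finset.prod_pos fun i _ => (hfac i).1
    have hPle : (∏ i : Fin n, (if ε i then 1 - p (i:ℕ) else p (i:ℕ))) ≤ 1 :=
      Finset.prod_le_one (fun i _ => (hfac i).1.le) (fun i _ => (hfac i).2)
    rw [hμ.2 n ε, ENNReal.toReal_ofReal hPpos.le]
    exact ⟨hPpos, hPle⟩
  have hcnn : ∀ n : ℕ, 0 ≤ 1 / ((n:ℝ) * Real.log 2) := by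
    intro n
    positivity
  have htauN : ∀ n : ℕ, tauN μ n =
      fun x : ℝ => (1 / ((n:ℝ) * Real.log 2)) *
        Real.log (∑ ε : Fin n → Bool, (μ (cyl ε)).toReal ^ x) := fun n => rfl
  have hcvx : ∀ n : ℕ, ConvexOn ℝ Set.univ (tauN μ n) := by
    intro n
    rw [htauN n]
    exact aux_convex (fun ε => (ha n ε).1) (hcnn n)
  have hderiv : ∀ (n : ℕ) (x : ℝ), ∃ d, HasDerivAt (tauN μ n) d x := by
    intro n x
    rw [htauN n]
    exact aux_hasDerivAt (fun ε => (ha n ε).1) _ x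
  -- upper bound
  have hub : ∀ (n : ℕ) (x : ℝ), 0 < x → tauN μ n x ≤ 1 := by
    intro n x hx
    rcases Nat.eq_zero_or_pos n with rfl | hn
    · simp [tauN]
    have Spos : (0:ℝ) < ∑ ε : Fin n → Bool, (μ (cyl ε)).toReal ^ x :=
      Finset.sum_pos (fun ε _ => Real.rpow_pos_of_pos (ha n ε).1 x) Finset.univ_nonempty
    have hSle : (∑ ε : Fin n → Bool, (μ (cyl ε)).toReal ^ x) ≤ (2:ℝ) ^ n := by
      calc (∑ ε : Fin n → Bool, (μ (cyl ε)).toReal ^ x)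
          ≤ ∑ _ε : Fin n → Bool, (1:ℝ) :=
            Finset.sum_le_sum fun ε _ =>
              Real.rpow_le_one (ha n ε).1.le (ha n ε).2 hx.le
        _ = (2:ℝ) ^ n := by
            simp [Finset.card_univ]
    have hlog : Real.log (∑ ε : Fin n → Bool, (μ (cyl ε)).toReal ^ x) ≤ (n:ℝ) * Real.log 2 := by
      calc Real.log (∑ ε : Fin n → Bool, (μ (cyl ε)).toReal ^ x)
          ≤ Real.log ((2:ℝ) ^ n) := Real.log_le_log Spos hSle
        _ = (n:ℝ) * Real.log 2 := by rw [Real.log_pow]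
    have hm : (0:ℝ) < (n:ℝ) * Real.log 2 := by
      have : (0:ℝ) < (n:ℝ) := by exact_mod_cast hn
      positivity
    rw [tauN]
    calc (1 / ((n:ℝ) * Real.log 2)) * Real.log (∑ ε : Fin n → Bool, (μ (cyl ε)).toReal ^ x)
        ≤ (1 / ((n:ℝ) * Real.log 2)) * ((n:ℝ) * Real.log 2) :=
          mul_le_mul_of_nonneg_left hlog (hcnn n)
      _ = 1 := one_div_mul_cancel hm.ne'
  -- eventual upper bound along the subsequence
  have hup : ∀ (x : ℝ), 0 < x → ∀ δ : ℝ, 0 < δ →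
      ∀ᶠ k in atTop, tauN μ (φ k) x < tauLq μ x + δ := by
    intro x hx δ hδ
    have hb : IsBoundedUnder (· ≤ ·) atTop (fun n : ℕ => tauN μ n x) :=
      isBoundedUnder_of ⟨1, fun n => hub n x hx⟩
    have h1 : limsup (fun n : ℕ => tauN μ n x) atTop < tauLq μ x + δ := by
      have : limsup (fun n : ℕ => tauN μ n x) atTop = tauLq μ x := rfl
      rw [this]; linarith
    have h2 := eventually_lt_of_limsup_lt h1 hb
    exact (hφ.tendsto_atTop).eventually h2
  rw [tendsto_order]
  constructor
  · -- lower bound on derivatives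
    intro b hb
    set b' : ℝ := (b + τ') / 2 with hb'def
    have hbb' : b < b' := by rw [hb'def]; linarith
    have hb'τ : b' < τ' := by rw [hb'def]; linarith
    have hslope := hasDerivAt_iff_tendsto_slope.1 hτ'
    have hl : Tendsto (slope (tauLq μ) q) (𝓝[<] q) (𝓝 τ') :=
      hslope.mono_left (nhdsWithin_mono _ fun z hz => ne_of_lt hz)
    have hev : ∀ᶠ y in 𝓝[<] q, b' < slope (tauLq μ) q y :=
      hl.eventually (eventually_gt_nhds hb'τ)
    have hmem : Ioo (0:ℝ) q ∈ 𝓝[<] q := Ioo_mem_nhdsLT_of_mem ⟨hq, le_refl q⟩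
    obtain ⟨y, hy1, hy2⟩ := (hev.and (eventually_of_mem hmem fun z hz => hz)).exists
    have hyq : y < q := hy2.2
    have hy0 : 0 < y := hy2.1
    have hqy : 0 < q - y := by linarith
    -- rewrite slope
    have hA : b' * (q - y) < tauLq μ q - tauLq μ y := by
      have h1 : slope (tauLq μ) q y = (tauLq μ q - tauLq μ y) / (q - y) := by
        rw [slope_def_field]; rw [← neg_div_neg_eq]; ring_nf
      rw [h1, lt_div_iff₀ hqy] at hy1
      linarith
    set δ : ℝ := (b' - b) * (q - y) / 3 with hδdef
    have hδ : 0 < δ := by rw [hδdef]; exact div_pos (mul_pos (by linarith) hqy) (by norm_num)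
    have E1 := hup y hy0 δ hδ
    have E2 : ∀ᶠ k in atTop, tauLq μ q - δ < tauN μ (φ k) q :=
      hconv.eventually (eventually_gt_nhds (by linarith))
    filter_upwards [E1, E2] with k h1 h2
    obtain ⟨d, hd⟩ := hderiv (φ k) q
    rw [hd.deriv]
    have hsl : slope (tauN μ (φ k)) y q ≤ d :=
      (hcvx (φ k)).slope_le_of_hasDerivAt (mem_univ y) (mem_univ q) hyq hd
    rw [slope_def_field] at hsl
    have h3 : b' * (q - y) = b * (q - y) + 3 * δ := by rw [hδdef]; ring
    have h4 : b * (q - y) < tauN μ (φ k) q - tauN μ (φ k) y := by linarith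
    have h5 : b < (tauN μ (φ k) q - tauN μ (φ k) y) / (q - y) := (lt_div_iff₀ hqy).2 h4
    linarith
  · -- upper bound on derivatives
    intro b hb
    set b' : ℝ := (b + τ') / 2 with hb'def
    have hbb' : b' < b := by rw [hb'def]; linarith
    have hb'τ : τ' < b' := by rw [hb'def]; linarith
    have hslope := hasDerivAt_iff_tendsto_slope.1 hτ'
    have hl : Tendsto (slope (tauLq μ) q) (𝓝[>] q) (𝓝 τ') :=
      hslope.mono_left (nhdsWithin_mono _ fun z hz => ne_of_gt hz)
    have hev : ∀ᶠ y in 𝓝[>] q, slope (tauLq μ) q y < b' :=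
      hl.eventually (eventually_lt_nhds hb'τ)
    have hmem : Ioo q (q + 1) ∈ 𝓝[>] q := Ioo_mem_nhdsGT_of_mem ⟨le_refl q, by linarith⟩
    obtain ⟨y, hy1, hy2⟩ := (hev.and (eventually_of_mem hmem fun z hz => hz)).exists
    have hyq : q < y := hy2.1
    have hy0 : 0 < y := lt_trans hq hyq
    have hqy : 0 < y - q := by linarith
    have hA : tauLq μ y - tauLq μ q < b' * (y - q) := by
      have h1 : slope (tauLq μ) q y = (tauLq μ y - tauLq μ q) / (y - q) := slope_def_field _ _ _
      rw [h1, div_lt_iff₀ hqy] at hy1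
      linarith
    set δ : ℝ := (b - b') * (y - q) / 3 with hδdef
    have hδ : 0 < δ := by rw [hδdef]; exact div_pos (mul_pos (by linarith) hqy) (by norm_num)
    have E1 := hup y hy0 δ hδ
    have E2 : ∀ᶠ k in atTop, tauLq μ q - δ < tauN μ (φ k) q :=
      hconv.eventually (eventually_gt_nhds (by linarith))
    filter_upwards [E1, E2] with k h1 h2
    obtain ⟨d, hd⟩ := hderiv (φ k) q
    rw [hd.deriv]
    have hsl : d ≤ slope (tauN μ (φ k)) q y :=
      (hcvx (φ k)).le_slope_of_hasDerivAt (mem_univ q) (mem_univ y) hyq hd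
    rw [slope_def_field] at hsl
    have h3 : b * (y - q) = b' * (y - q) + 3 * δ := by rw [hδdef]; ring
    have h4 : tauN μ (φ k) y - tauN μ (φ k) q < b * (y - q) := by linarith
    have h5 : (tauN μ (φ k) y - tauN μ (φ k) q) / (y - q) < b := (div_lt_iff₀ hqy).2 h4
    linarith
end
end

section
/- Let μ be an inhomogeneous Bernoulli product on Σ with weights (p_n) ⊂ (0,1), let q > 0, and let (n_k) be a subsequence such that τ_{μ,n_k}(q) → τ_μ(q) = limsup_n τ_{μ,n}(q) as k → ∞. Then τ_μ'(q^-) ≤ liminf_{k→∞} τ_{μ,n_k}'(q), where τ_μ'(q^-) is the left derivative of the convex function τ_μ at q. -/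
open MeasureTheory Filter Set Topology

noncomputable section

section aux

variable {ι : Type*} [Fintype ι] [Nonempty ι] {a : ι → ℝ}

lemma sum_rpow_pos (ha : ∀ i, 0 < a i) (t : ℝ) : 0 < ∑ i, a i ^ t :=
  Finset.sum_pos (fun i _ => Real.rpow_pos_of_pos (ha i) t) Finset.univ_nonempty

lemma lse_hasDerivAt (ha : ∀ i, 0 < a i) (q : ℝ) :
    HasDerivAt (fun t => Real.log (∑ i, a i ^ t))
      ((∑ i, a i ^ q * Real.log (a i)) / ∑ i, a i ^ q) q := by
  have h : HasDerivAt (fun t => ∑ i, a i ^ t) (∑ i, a i ^ q * Real.log (a i)) q :=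
    HasDerivAt.fun_sum fun i _ => (Real.hasStrictDerivAt_const_rpow (ha i) q).hasDerivAt
  exact h.log (sum_rpow_pos ha q).ne'

lemma lse_secant (ha : ∀ i, 0 < a i) {s q : ℝ} (hs : s < q) :
    Real.log (∑ i, a i ^ q) - Real.log (∑ i, a i ^ s) ≤
      (q - s) * ((∑ i, a i ^ q * Real.log (a i)) / ∑ i, a i ^ q) := by
  set S : ℝ := ∑ i, a i ^ q with hS
  have hSpos : 0 < S := sum_rpow_pos ha q
  have hsum1 : ∑ i : ι, a i ^ q / S = 1 := by
    rw [← Finset.sum_div, ← hS]; field_simp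
  have jensen := (strictConcaveOn_log_Ioi.concaveOn).le_map_sum
    (t := Finset.univ) (w := fun i => a i ^ q / S) (p := fun i => a i ^ (s - q))
    (fun i _ => div_nonneg (Real.rpow_pos_of_pos (ha i) q).le hSpos.le) hsum1
    (fun i _ => Set.mem_Ioi.2 (Real.rpow_pos_of_pos (ha i) _))
  have h1 : ∑ i : ι, (a i ^ q / S) • (a i ^ (s - q)) = (∑ i, a i ^ s) / S := by
    rw [Finset.sum_div]
    refine Finset.sum_congr rfl fun i _ => ?_
    rw [smul_eq_mul, div_mul_eq_mul_div, ← Real.rpow_add (ha i)]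
    ring_nf
  have h2 : ∑ i : ι, (a i ^ q / S) • Real.log (a i ^ (s - q))
      = (s - q) * ((∑ i, a i ^ q * Real.log (a i)) / S) := by
    rw [Finset.sum_div, Finset.mul_sum]
    refine Finset.sum_congr rfl fun i _ => ?_
    rw [smul_eq_mul, Real.log_rpow (ha i)]
    ring
  rw [h1, h2] at jensen
  rw [Real.log_div (sum_rpow_pos ha s).ne' hSpos.ne'] at jensen
  have hring : (q - s) * ((∑ i, a i ^ q * Real.log (a i)) / S)
      = -((s - q) * ((∑ i, a i ^ q * Real.log (a i)) / S)) := by ring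
  rw [hring]
  linarith

end aux

section bernoulli

variable {p : ℕ → ℝ} {μ : Measure (ℕ → Bool)}

lemma measure_cyl_toReal (hp : ∀ k, p k ∈ Set.Ioo (0 : ℝ) 1) (hμ : IsBernoulliProduct p μ)
    {n : ℕ} (ε : Fin n → Bool) :
    0 < (μ (cyl ε)).toReal ∧ (μ (cyl ε)).toReal ≤ 1 := by
  have hpos : ∀ i : Fin n, 0 < (if ε i then 1 - p (i : ℕ) else p (i : ℕ)) := by
    intro i
    rcases hp (i : ℕ) with ⟨h0, h1⟩
    split <;> linarith
  have hle : ∀ i : Fin n, (if ε i then 1 - p (i : ℕ) else p (i : ℕ)) ≤ 1 := by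
    intro i
    rcases hp (i : ℕ) with ⟨h0, h1⟩
    split <;> linarith
  have hP : 0 < ∏ i : Fin n, (if ε i then 1 - p (i : ℕ) else p (i : ℕ)) :=
    Finset.prod_pos fun i _ => hpos i
  have hP1 : (∏ i : Fin n, (if ε i then 1 - p (i : ℕ) else p (i : ℕ))) ≤ 1 :=
    Finset.prod_le_one (fun i _ => (hpos i).le) (fun i _ => hle i)
  rw [hμ.2 n ε, ENNReal.toReal_ofReal hP.le]
  exact ⟨hP, hP1⟩

lemma tauN_hasDerivAt (hp : ∀ k, p k ∈ Set.Ioo (0 : ℝ) 1) (hμ : IsBernoulliProduct p μ)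
    (n : ℕ) (q : ℝ) :
    HasDerivAt (tauN μ n)
      ((1 / (n * Real.log 2)) *
        ((∑ ε : Fin n → Bool, (μ (cyl ε)).toReal ^ q * Real.log ((μ (cyl ε)).toReal)) /
          ∑ ε : Fin n → Bool, (μ (cyl ε)).toReal ^ q)) q := by
  have ha : ∀ ε : Fin n → Bool, 0 < (μ (cyl ε)).toReal :=
    fun ε => (measure_cyl_toReal hp hμ ε).1
  exact (lse_hasDerivAt ha q).const_mul (1 / (n * Real.log 2))

lemma tauN_deriv (hp : ∀ k, p k ∈ Set.Ioo (0 : ℝ) 1) (hμ : IsBernoulliProduct p μ)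
    (n : ℕ) (q : ℝ) :
    deriv (tauN μ n) q =
      (1 / (n * Real.log 2)) *
        ((∑ ε : Fin n → Bool, (μ (cyl ε)).toReal ^ q * Real.log ((μ (cyl ε)).toReal)) /
          ∑ ε : Fin n → Bool, (μ (cyl ε)).toReal ^ q) :=
  (tauN_hasDerivAt hp hμ n q).deriv

lemma tauN_deriv_nonpos (hp : ∀ k, p k ∈ Set.Ioo (0 : ℝ) 1) (hμ : IsBernoulliProduct p μ)
    (n : ℕ) (q : ℝ) : deriv (tauN μ n) q ≤ 0 := by
  rw [tauN_deriv hp hμ n q]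
  have hc : (0:ℝ) ≤ 1 / (n * Real.log 2) := by positivity
  refine mul_nonpos_of_nonneg_of_nonpos hc (div_nonpos_of_nonpos_of_nonneg ?_ ?_)
  · refine Finset.sum_nonpos fun ε _ => ?_
    have h := measure_cyl_toReal hp hμ ε
    exact mul_nonpos_of_nonneg_of_nonpos (Real.rpow_pos_of_pos h.1 q).le
      (Real.log_nonpos h.1.le h.2)
  · exact (sum_rpow_pos (fun ε => (measure_cyl_toReal hp hμ ε).1) q).le

lemma tauN_secant (hp : ∀ k, p k ∈ Set.Ioo (0 : ℝ) 1) (hμ : IsBernoulliProduct p μ)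
    (n : ℕ) {s q : ℝ} (hs : s < q) :
    tauN μ n q - tauN μ n s ≤ (q - s) * deriv (tauN μ n) q := by
  have ha : ∀ ε : Fin n → Bool, 0 < (μ (cyl ε)).toReal :=
    fun ε => (measure_cyl_toReal hp hμ ε).1
  have hc : (0:ℝ) ≤ 1 / (n * Real.log 2) := by positivity
  have h := lse_secant ha hs
  rw [tauN_deriv hp hμ n q]
  have : tauN μ n q - tauN μ n s = (1 / (n * Real.log 2)) *
      (Real.log (∑ ε : Fin n → Bool, (μ (cyl ε)).toReal ^ q) -
        Real.log (∑ ε : Fin n → Bool, (μ (cyl ε)).toReal ^ s)) := by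
    simp [tauN, mul_sub]
  rw [this]
  calc (1 / (n * Real.log 2)) *
      (Real.log (∑ ε : Fin n → Bool, (μ (cyl ε)).toReal ^ q) -
        Real.log (∑ ε : Fin n → Bool, (μ (cyl ε)).toReal ^ s))
      ≤ (1 / (n * Real.log 2)) * ((q - s) *
        ((∑ ε : Fin n → Bool, (μ (cyl ε)).toReal ^ q * Real.log ((μ (cyl ε)).toReal)) /
          ∑ ε : Fin n → Bool, (μ (cyl ε)).toReal ^ q)) :=
        mul_le_mul_of_nonneg_left h hc
    _ = (q - s) * ((1 / (n * Real.log 2)) *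
        ((∑ ε : Fin n → Bool, (μ (cyl ε)).toReal ^ q * Real.log ((μ (cyl ε)).toReal)) /
          ∑ ε : Fin n → Bool, (μ (cyl ε)).toReal ^ q)) := by ring

lemma tauN_le_one (hp : ∀ k, p k ∈ Set.Ioo (0 : ℝ) 1) (hμ : IsBernoulliProduct p μ)
    (n : ℕ) {s : ℝ} (hs : 0 ≤ s) : tauN μ n s ≤ 1 := by
  have hc : (0:ℝ) ≤ 1 / (n * Real.log 2) := by positivity
  have hsum : (∑ ε : Fin n → Bool, (μ (cyl ε)).toReal ^ s) ≤ (2:ℝ) ^ n := by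
    calc (∑ ε : Fin n → Bool, (μ (cyl ε)).toReal ^ s)
        ≤ ∑ _ε : Fin n → Bool, (1:ℝ) := by
          refine Finset.sum_le_sum fun ε _ => ?_
          have h := measure_cyl_toReal hp hμ ε
          exact Real.rpow_le_one h.1.le h.2 hs
      _ = (2:ℝ) ^ n := by
          simp [Finset.card_univ]
  have hpos : 0 < ∑ ε : Fin n → Bool, (μ (cyl ε)).toReal ^ s :=
    sum_rpow_pos (fun ε => (measure_cyl_toReal hp hμ ε).1) s
  have hlog : Real.log (∑ ε : Fin n → Bool, (μ (cyl ε)).toReal ^ s) ≤ n * Real.log 2 := by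
    calc Real.log (∑ ε : Fin n → Bool, (μ (cyl ε)).toReal ^ s)
        ≤ Real.log ((2:ℝ) ^ n) := Real.log_le_log hpos hsum
      _ = n * Real.log 2 := by rw [Real.log_pow]
  calc tauN μ n s ≤ (1 / (n * Real.log 2)) * (n * Real.log 2) :=
        mul_le_mul_of_nonneg_left hlog hc
    _ ≤ 1 := by
        rcases eq_or_ne (n:ℝ) 0 with h | h
        · simp [h]
        · rw [one_div_mul_cancel]
          positivity

end bernoulli

/-- Lemma 3.3. Let `μ` be an inhomogeneous Bernoulli product with
weights `(pₙ) ⊂ (0,1)`, `q > 0`, and let `(n_k)` be a (strictly increasing) subsequence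
such that `τ_{μ,n_k}(q) → τ_μ(q) = limsup_n τ_{μ,n}(q)`. Then
`τ_μ'(q⁻) ≤ liminf_k τ_{μ,n_k}'(q)`, where `αm = τ_μ'(q⁻)` is the left derivative of
the convex function `τ_μ` at `q`. -/
theorem statement13
    (p : ℕ → ℝ) (hp : ∀ k, p k ∈ Set.Ioo (0 : ℝ) 1)
    (μ : Measure (ℕ → Bool)) (hμ : IsBernoulliProduct p μ)
    (q : ℝ) (hq : 0 < q)
    (φ : ℕ → ℕ) (hφ : StrictMono φ)
    (hconv : Tendsto (fun k : ℕ => tauN μ (φ k) q) atTop (nhds (tauLq μ q)))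
    (αm : ℝ) (hαm : HasDerivWithinAt (tauLq μ) αm (Set.Iio q) q) :
    αm ≤ liminf (fun k : ℕ => deriv (tauN μ (φ k)) q) atTop := by
  set u : ℕ → ℝ := fun k => deriv (tauN μ (φ k)) q with hu
  set L : ℝ := liminf u atTop with hL
  have hcob : IsCoboundedUnder (· ≥ ·) atTop u :=
    isCoboundedUnder_ge_of_le atTop (x := 0) fun k => tauN_deriv_nonpos hp hμ (φ k) q
  -- Step B: for every s ∈ (0, q), the secant slope of tauLq is ≤ L
  have stepB : ∀ s : ℝ, 0 < s → s < q → (tauLq μ q - tauLq μ s) / (q - s) ≤ L := by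
    intro s hs0 hsq
    have hqs : 0 < q - s := by linarith
    refine le_of_forall_pos_le_add fun ε hε => ?_
    set ε₁ : ℝ := ε * (q - s) / 2 with hε₁
    have hε₁pos : 0 < ε₁ := by positivity
    -- eventually (in k), tauN μ (φ k) q > tauLq μ q - ε₁
    have h1 : ∀ᶠ k in atTop, tauLq μ q - ε₁ < tauN μ (φ k) q :=
      hconv.eventually (eventually_gt_nhds (by linarith))
    -- eventually (in n), tauN μ n s < tauLq μ s + ε₁
    have hbdd : IsBoundedUnder (· ≤ ·) atTop (fun n : ℕ => tauN μ n s) :=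
      ⟨1, Filter.eventually_map.2 (Eventually.of_forall fun n => tauN_le_one hp hμ n hs0.le)⟩
    have h2 : ∀ᶠ n in atTop, tauN μ n s < tauLq μ s + ε₁ :=
      eventually_lt_of_limsup_lt (by simp only [tauLq]; linarith) hbdd
    have h2' : ∀ᶠ k in atTop, tauN μ (φ k) s < tauLq μ s + ε₁ :=
      (hφ.tendsto_atTop).eventually h2
    have key : ∀ᶠ k in atTop, (tauLq μ q - tauLq μ s) / (q - s) - ε ≤ u k := by
      filter_upwards [h1, h2'] with k hk1 hk2
      have hsec : (tauN μ (φ k) q - tauN μ (φ k) s) / (q - s) ≤ u k := by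
        rw [div_le_iff₀ hqs]
        have := tauN_secant hp hμ (φ k) hsq
        linarith [this]
      have hnum : tauLq μ q - tauLq μ s - 2 * ε₁ ≤ tauN μ (φ k) q - tauN μ (φ k) s := by
        linarith
      have : (tauLq μ q - tauLq μ s - 2 * ε₁) / (q - s)
          ≤ (tauN μ (φ k) q - tauN μ (φ k) s) / (q - s) :=
        div_le_div_of_nonneg_right hnum hqs.le
      have heq : (tauLq μ q - tauLq μ s - 2 * ε₁) / (q - s)
          = (tauLq μ q - tauLq μ s) / (q - s) - ε := by
        rw [hε₁]; field_simp
      linarith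
    have := le_liminf_of_le hcob key
    linarith [this]
  -- Step C: let s → q⁻
  have hslope : Tendsto (slope (tauLq μ) q) (𝓝[Iio q \ {q}] q) (𝓝 αm) :=
    hasDerivWithinAt_iff_tendsto_slope.1 hαm
  have hset : Iio q \ {q} = Iio q := diff_singleton_eq_self (by simp)
  rw [hset] at hslope
  have hev : ∀ᶠ s in 𝓝[Iio q] q, slope (tauLq μ) q s ≤ L := by
    have hpos : ∀ᶠ s in 𝓝[Iio q] q, 0 < s :=
      eventually_nhdsWithin_of_eventually_nhds (eventually_gt_nhds hq)
    filter_upwards [self_mem_nhdsWithin, hpos] with s hs hs0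
    have hsq : s < q := hs
    have h := stepB s hs0 hsq
    have heq : slope (tauLq μ) q s = (tauLq μ q - tauLq μ s) / (q - s) := by
      rw [slope_def_field]
      rw [show s - q = -(q - s) by ring, show tauLq μ s - tauLq μ q = -(tauLq μ q - tauLq μ s)
        by ring, neg_div_neg_eq]
    rw [heq]
    exact h
  exact le_of_tendsto hslope hev
end
end

section
/- For any p_1,…,p_n ∈ (0,1) and any convex combination τ = Σ_{i=1}^n λ_i τ(p_i,·) (λ_i ≥ 0, Σλ_i = 1), there exists a sequence (p_k') taking values in {p_1,…,p_n} such that the inhomogeneous Bernoulli product μ with weights (p_k') satisfies lim_{m→∞} τ_{μ,m}(q) = τ(q) for every q ∈ ℝ; in particular the L^q-spectrum τ_μ of μ equals τ. -/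
open MeasureTheory Filter Set

noncomputable section

/-- `τ(p,q) = log(p^q + (1-p)^q) / log 2`, the `L^q`-spectrum of the homogeneous
Bernoulli product with weight `p`. -/
def taup (p q : ℝ) : ℝ :=
  Real.log (p ^ q + (1 - p) ^ q) / Real.log 2

namespace S19

variable (p : ℕ → ℝ)

def rem : ℕ → ℝ → ℝ
  | 0, x => x
  | (k+1), x => if rem k x < p k then rem k x / p k else (rem k x - p k) / (1 - p k)

def bitf (k : ℕ) (x : ℝ) : Bool := if p k ≤ rem p k x then true else false

lemma bitf_true_iff (k : ℕ) (x : ℝ) : bitf p k x = true ↔ p k ≤ rem p k x := by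
  rw [bitf]; split_ifs with h <;> simp [h]

lemma bitf_false_iff (k : ℕ) (x : ℝ) : bitf p k x = false ↔ rem p k x < p k := by
  rw [bitf]; split_ifs with h <;> simp [h, not_le, lt_iff_not_ge]

lemma measurable_rem (k : ℕ) : Measurable (rem p k) := by
  induction k with
  | zero => exact measurable_id
  | succ k ih =>
    have hs : MeasurableSet {x | rem p k x < p k} :=
      measurableSet_lt ih measurable_const
    exact Measurable.ite hs (ih.div_const _) ((ih.sub_const _).div_const _)

lemma measurable_bitf (k : ℕ) : Measurable (bitf p k) := by
  have hs : MeasurableSet {x | p k ≤ rem p k x} :=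
    measurableSet_le measurable_const (measurable_rem p k)
  exact Measurable.ite hs measurable_const measurable_const

def toSeq : ℝ → (ℕ → Bool) := fun x k => bitf p k x

lemma measurable_toSeq : Measurable (toSeq p) :=
  measurable_pi_iff.mpr fun k => measurable_bitf p k

lemma measurable_cyl {m : ℕ} (ε : Fin m → Bool) : MeasurableSet (cyl ε) := by
  have : cyl ε = ⋂ i : Fin m, (fun x : ℕ → Bool => x (i : ℕ)) ⁻¹' {ε i} := by
    ext x; simp [cyl]
  rw [this]
  exact MeasurableSet.iInter fun i =>
    (measurable_pi_apply _) (measurableSet_singleton _)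

def wgt {m : ℕ} (ε : Fin m → Bool) : ℝ :=
  ∏ i : Fin m, if ε i then 1 - p (i : ℕ) else p (i : ℕ)

lemma wgt_pos (hp : ∀ k, p k ∈ Set.Ioo (0:ℝ) 1) {m : ℕ} (ε : Fin m → Bool) :
    0 < wgt p ε :=
  Finset.prod_pos fun i _ => by
    rcases hp (i : ℕ) with ⟨h0, h1⟩
    split <;> [linarith; exact h0]

lemma interval (hp : ∀ k, p k ∈ Set.Ioo (0:ℝ) 1) :
    ∀ (m : ℕ) (ε : Fin m → Bool), ∃ a : ℝ, 0 ≤ a ∧ a + wgt p ε ≤ 1 ∧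
      {x : ℝ | x ∈ Set.Ico (0:ℝ) 1 ∧ ∀ i : Fin m, bitf p (i : ℕ) x = ε i}
        = Set.Ico a (a + wgt p ε) ∧
      ∀ x ∈ Set.Ico a (a + wgt p ε), rem p m x = (x - a) / wgt p ε := by
  intro m
  induction m with
  | zero =>
    intro ε
    refine ⟨0, le_refl _, ?_, ?_, ?_⟩
    · simp [wgt]
    · ext x; simp [wgt]
    · intro x hx; simp [wgt, rem]
  | succ m ih =>
    intro ε
    obtain ⟨a, ha0, ha1, hset, hrem⟩ := ih (fun i => ε i.castSucc)
    set w := wgt p (fun i : Fin m => ε i.castSucc) with hw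
    have hwpos : 0 < w := wgt_pos p hp _
    obtain ⟨hpm0, hpm1⟩ := hp m
    have hw' : wgt p ε = w * (if ε (Fin.last m) then 1 - p m else p m) := by
      rw [wgt, Fin.prod_univ_castSucc, hw, wgt]
      simp
    have hbit : ∀ x ∈ Set.Ico a (a + w),
        (bitf p m x = true ↔ a + w * p m ≤ x) := by
      intro x hx
      rw [bitf_true_iff, hrem x hx, le_div_iff₀ hwpos]
      constructor <;> intro <;> nlinarith
    have hmem : ∀ x : ℝ, (x ∈ Set.Ico (0:ℝ) 1 ∧ ∀ i : Fin (m+1), bitf p (i:ℕ) x = ε i)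
        ↔ (x ∈ Set.Ico a (a + w) ∧ bitf p m x = ε (Fin.last m)) := by
      intro x
      constructor
      · rintro ⟨hx01, hbits⟩
        have h1 : ∀ i : Fin m, bitf p (i:ℕ) x = ε i.castSucc := fun i => by
          simpa using hbits i.castSucc
        have h2 : bitf p m x = ε (Fin.last m) := by
          simpa using hbits (Fin.last m)
        have : x ∈ Set.Ico a (a + w) := by rw [← hset]; exact ⟨hx01, h1⟩
        exact ⟨this, h2⟩
      · rintro ⟨hxmem, h2⟩
        have hx' : x ∈ {x : ℝ | x ∈ Set.Ico (0:ℝ) 1 ∧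
            ∀ i : Fin m, bitf p (i:ℕ) x = ε i.castSucc} := by rw [hset]; exact hxmem
        obtain ⟨hx01, h1⟩ := hx'
        refine ⟨hx01, fun i => ?_⟩
        refine Fin.lastCases ?_ (fun j => ?_) i
        · simpa using h2
        · simpa using h1 j
    cases hlast : ε (Fin.last m) with
    | false =>
      have hwe : wgt p ε = w * p m := by rw [hw', hlast]; simp
      refine ⟨a, ha0, by rw [hwe]; nlinarith, ?_, ?_⟩
      · ext x
        rw [Set.mem_setOf_eq, hmem x, hlast, hwe]
        simp only [Set.mem_Ico]
        rw [bitf_false_iff]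
        constructor
        · rintro ⟨⟨hxa, hxw⟩, hr⟩
          rw [hrem x ⟨hxa, hxw⟩, div_lt_iff₀ hwpos] at hr
          exact ⟨hxa, by nlinarith⟩
        · rintro ⟨hxa, hxw⟩
          have hxmem : x ∈ Set.Ico a (a + w) := ⟨hxa, by nlinarith⟩
          refine ⟨hxmem, ?_⟩
          rw [hrem x hxmem, div_lt_iff₀ hwpos]
          nlinarith
      · intro x hx
        rw [hwe] at hx ⊢
        have hxmem : x ∈ Set.Ico a (a + w) := ⟨hx.1, by nlinarith [hx.2]⟩
        have hr := hrem x hxmem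
        have hlt : rem p m x < p m := by
          rw [hr, div_lt_iff₀ hwpos]
          nlinarith [hx.2]
        show rem p (m+1) x = (x - a) / (w * p m)
        rw [rem, if_pos hlt, hr, div_div]
    | true =>
      have hwe : wgt p ε = w * (1 - p m) := by rw [hw', hlast]; simp
      refine ⟨a + w * p m, by nlinarith, by rw [hwe]; nlinarith, ?_, ?_⟩
      · ext x
        rw [Set.mem_setOf_eq, hmem x, hlast, hwe]
        simp only [Set.mem_Ico]
        constructor
        · rintro ⟨⟨hxa, hxw⟩, hr⟩
          have := (hbit x ⟨hxa, hxw⟩).1 hr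
          exact ⟨this, by nlinarith⟩
        · rintro ⟨hxa, hxw⟩
          have hxmem : x ∈ Set.Ico a (a + w) := ⟨by nlinarith, by nlinarith⟩
          exact ⟨hxmem, (hbit x hxmem).2 hxa⟩
      · intro x hx
        rw [hwe] at hx ⊢
        have hxmem : x ∈ Set.Ico a (a + w) := ⟨by nlinarith [hx.1], by nlinarith [hx.2]⟩
        have hr := hrem x hxmem
        have hge : ¬ (rem p m x < p m) := by
          push_neg
          rw [hr, le_div_iff₀ hwpos]
          nlinarith [hx.1]
        show rem p (m+1) x = (x - (a + w * p m)) / (w * (1 - p m))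
        rw [rem, if_neg hge, hr]
        have he : (x - a) / w - p m = (x - (a + w * p m)) / w := by
          field_simp; ring
        rw [he, div_div]

def bern : Measure (ℕ → Bool) := (volume.restrict (Set.Ico (0:ℝ) 1)).map (toSeq p)

lemma bern_cyl (hp : ∀ k, p k ∈ Set.Ioo (0:ℝ) 1) {m : ℕ} (ε : Fin m → Bool) :
    bern p (cyl ε) = ENNReal.ofReal (wgt p ε) := by
  obtain ⟨a, ha0, ha1, hset, -⟩ := interval p hp m ε
  rw [bern, Measure.map_apply (measurable_toSeq p) (measurable_cyl ε),
    Measure.restrict_apply ((measurable_toSeq p) (measurable_cyl ε))]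
  have : toSeq p ⁻¹' cyl ε ∩ Set.Ico 0 1
      = {x : ℝ | x ∈ Set.Ico (0:ℝ) 1 ∧ ∀ i : Fin m, bitf p (i : ℕ) x = ε i} := by
    ext x
    simp [toSeq, cyl, and_comm]
  rw [this, hset, Real.volume_Ico]
  congr 1
  ring

lemma bern_prob : IsProbabilityMeasure (bern p) := by
  constructor
  rw [bern, Measure.map_apply (measurable_toSeq p) MeasurableSet.univ,
    Set.preimage_univ, Measure.restrict_apply MeasurableSet.univ, Set.univ_inter,
    Real.volume_Ico]
  norm_num


def Tb (m : ℕ) : ℕ := ∑ j ∈ Finset.range m, (j + 1)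

def blk (k : ℕ) : ℕ := Nat.findGreatest (fun m => Tb m ≤ k) k

variable (n : ℕ) (lam : Fin n → ℝ)

def Lamc (i : ℕ) : ℝ := ∑ j : Fin n, if (j : ℕ) < i then lam j else 0

def flr (L i : ℕ) : ℕ := ⌊Lamc n lam i * L⌋₊

def cls (L j : ℕ) : ℕ := Nat.findGreatest (fun i => flr n lam L i ≤ j) (n - 1)

def ind (k : ℕ) : ℕ := cls n lam (blk k + 1) (k - Tb (blk k))

lemma Lamc_zero : Lamc n lam 0 = 0 := by simp [Lamc]

lemma Lamc_n (hsum : ∑ i, lam i = 1) : Lamc n lam n = 1 := by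
  rw [Lamc, ← hsum]
  exact Finset.sum_congr rfl fun j _ => by simp [j.isLt]

lemma Lamc_mono (hlam : ∀ i, 0 ≤ lam i) : Monotone (Lamc n lam) := by
  intro i i' hii'
  apply Finset.sum_le_sum
  intro j _
  split_ifs with h1 h2 h2
  · exact le_refl _
  · omega
  · exact hlam j
  · exact le_refl _

lemma Lamc_nonneg (hlam : ∀ i, 0 ≤ lam i) (i : ℕ) : 0 ≤ Lamc n lam i := by
  rw [← Lamc_zero n lam]
  exact Lamc_mono n lam hlam (Nat.zero_le i)

lemma Lamc_succ (i : ℕ) (h : i < n) :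
    Lamc n lam (i + 1) = Lamc n lam i + lam ⟨i, h⟩ := by
  rw [Lamc, Lamc]
  have key : ∀ j : Fin n, (if (j : ℕ) < i + 1 then lam j else 0)
      = (if (j : ℕ) < i then lam j else 0) + (if j = ⟨i, h⟩ then lam j else 0) := by
    intro j
    rcases lt_trichotomy (j : ℕ) i with hj | hj | hj
    · have : j ≠ ⟨i, h⟩ := by simp [Fin.ext_iff]; omega
      simp [hj, Nat.lt_succ_of_lt hj, this]
    · have : j = ⟨i, h⟩ := by simp [Fin.ext_iff, hj]
      simp [this, hj]
    · have h1 : ¬ ((j : ℕ) < i + 1) := by omega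
      have h2 : ¬ ((j : ℕ) < i) := by omega
      have : j ≠ ⟨i, h⟩ := by simp [Fin.ext_iff]; omega
      simp [h1, h2, this]
  rw [Finset.sum_congr rfl fun j _ => key j, Finset.sum_add_distrib]
  congr 1
  simp

lemma flr_zero (L : ℕ) : flr n lam L 0 = 0 := by simp [flr, Lamc_zero]

lemma flr_top (hsum : ∑ i, lam i = 1) (L : ℕ) : flr n lam L n = L := by
  simp [flr, Lamc_n n lam hsum]

lemma flr_mono (hlam : ∀ i, 0 ≤ lam i) (L : ℕ) : Monotone (flr n lam L) :=
  fun i i' h => Nat.floor_mono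
    (mul_le_mul_of_nonneg_right (Lamc_mono n lam hlam h) (Nat.cast_nonneg L))

lemma cls_lt (hn : 0 < n) (L j : ℕ) : cls n lam L j < n :=
  lt_of_le_of_lt (Nat.findGreatest_le _) (by omega)

lemma cls_spec (L j : ℕ) : flr n lam L (cls n lam L j) ≤ j :=
  Nat.findGreatest_spec (P := fun i => flr n lam L i ≤ j) (Nat.zero_le _)
    (by simp [flr_zero])

lemma cls_eq_iff (hn : 0 < n) (hlam : ∀ i, 0 ≤ lam i) (hsum : ∑ i, lam i = 1)
    {L j i : ℕ} (hi : i < n) (hj : j < L) :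
    cls n lam L j = i ↔ (flr n lam L i ≤ j ∧ j < flr n lam L (i + 1)) := by
  constructor
  · rintro rfl
    refine ⟨cls_spec n lam L j, ?_⟩
    by_cases hc : cls n lam L j + 1 ≤ n - 1
    · by_contra hle
      push_neg at hle
      exact Nat.findGreatest_is_greatest (Nat.lt_succ_self _) hc hle
    · have hcl : cls n lam L j < n := cls_lt n lam hn L j
      have : cls n lam L j + 1 = n := by omega
      rw [this, flr_top n lam hsum]
      exact hj
  · rintro ⟨h1, h2⟩
    have hle : i ≤ cls n lam L j :=
      Nat.le_findGreatest (P := fun i => flr n lam L i ≤ j) (by omega) h1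
    have hge : cls n lam L j ≤ i := by
      by_contra hc
      push_neg at hc
      have hs := cls_spec n lam L j
      have hm := flr_mono n lam hlam L (show i + 1 ≤ cls n lam L j by omega)
      omega
    omega

lemma cls_filter (hn : 0 < n) (hlam : ∀ i, 0 ≤ lam i) (hsum : ∑ i, lam i = 1)
    {L i : ℕ} (hi : i < n) :
    (Finset.range L).filter (fun j => cls n lam L j = i)
      = Finset.Ico (flr n lam L i) (flr n lam L (i + 1)) := by
  ext j
  simp only [Finset.mem_filter, Finset.mem_range, Finset.mem_Ico]
  constructor
  · rintro ⟨hj, hcls⟩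
    exact (cls_eq_iff n lam hn hlam hsum hi hj).1 hcls
  · rintro ⟨h1, h2⟩
    have hjL : j < L := by
      have hstep : flr n lam L (i + 1) ≤ flr n lam L n :=
        flr_mono n lam hlam L (show i + 1 ≤ n by omega)
      rw [flr_top n lam hsum L] at hstep
      omega
    exact ⟨hjL, (cls_eq_iff n lam hn hlam hsum hi hjL).2 ⟨h1, h2⟩⟩

lemma block_sum (hn : 0 < n) (hlam : ∀ i, 0 ≤ lam i) (hsum : ∑ i, lam i = 1)
    (gN : ℕ → ℝ) (L : ℕ) :
    ∑ j ∈ Finset.range L, gN (cls n lam L j)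
      = ∑ i ∈ Finset.range n, ((flr n lam L (i + 1) - flr n lam L i : ℕ) : ℝ) * gN i := by
  rw [← Finset.sum_fiberwise_of_maps_to
    (g := fun j => cls n lam L j) (t := Finset.range n)
    (fun j _ => Finset.mem_range.mpr (cls_lt n lam hn L j))
    (fun j => gN (cls n lam L j))]
  apply Finset.sum_congr rfl
  intro i hi
  have hi' : i < n := Finset.mem_range.mp hi
  have : ∀ j ∈ (Finset.range L).filter (fun j => cls n lam L j = i),
      gN (cls n lam L j) = gN i := by
    intro j hj
    rw [(Finset.mem_filter.mp hj).2]
  rw [Finset.sum_congr rfl this, Finset.sum_const, cls_filter n lam hn hlam hsum hi',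
    Nat.card_Ico, nsmul_eq_mul]

lemma block_est (hn : 0 < n) (hlam : ∀ i, 0 ≤ lam i) (hsum : ∑ i, lam i = 1)
    (gN : ℕ → ℝ) (L : ℕ) :
    |∑ j ∈ Finset.range L, gN (cls n lam L j)
      - (L : ℝ) * ∑ i ∈ Finset.range n, (Lamc n lam (i + 1) - Lamc n lam i) * gN i|
      ≤ ∑ i ∈ Finset.range n, |gN i| := by
  rw [block_sum n lam hn hlam hsum gN L, Finset.mul_sum, ← Finset.sum_sub_distrib]
  refine le_trans (Finset.abs_sum_le_sum_abs _ _) (Finset.sum_le_sum ?_)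
  intro i hi
  have hmono : flr n lam L i ≤ flr n lam L (i + 1) :=
    flr_mono n lam hlam L (Nat.le_succ i)
  rw [Nat.cast_sub hmono]
  have key : |((flr n lam L (i + 1) : ℝ) - (flr n lam L i : ℝ))
      - (Lamc n lam (i + 1) - Lamc n lam i) * (L : ℝ)| ≤ 1 := by
    have h1 : (flr n lam L (i + 1) : ℝ) ≤ Lamc n lam (i + 1) * L :=
      Nat.floor_le (mul_nonneg (Lamc_nonneg n lam hlam _) (Nat.cast_nonneg L))
    have h2 : Lamc n lam (i + 1) * L < flr n lam L (i + 1) + 1 :=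
      Nat.lt_floor_add_one _
    have h3 : (flr n lam L i : ℝ) ≤ Lamc n lam i * L :=
      Nat.floor_le (mul_nonneg (Lamc_nonneg n lam hlam _) (Nat.cast_nonneg L))
    have h4 : Lamc n lam i * L < flr n lam L i + 1 := Nat.lt_floor_add_one _
    rw [abs_le]
    constructor <;> nlinarith
  calc |((flr n lam L (i + 1) : ℝ) - flr n lam L i) * gN i
        - (L : ℝ) * ((Lamc n lam (i + 1) - Lamc n lam i) * gN i)|
      = |((flr n lam L (i + 1) : ℝ) - flr n lam L i
          - (Lamc n lam (i + 1) - Lamc n lam i) * L)| * |gN i| := by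
        rw [← abs_mul]; ring_nf
    _ ≤ 1 * |gN i| := mul_le_mul_of_nonneg_right key (abs_nonneg _)
    _ = |gN i| := one_mul _

lemma Tb_succ (m : ℕ) : Tb (m + 1) = Tb m + (m + 1) := Finset.sum_range_succ _ m

lemma le_Tb (m : ℕ) : m ≤ Tb m := by
  induction m with
  | zero => simp [Tb]
  | succ m ih => rw [Tb_succ]; omega

lemma Tb_mono : Monotone Tb := fun a b h =>
  Finset.sum_le_sum_of_subset (Finset.range_subset_range.mpr h)

lemma two_Tb (m : ℕ) : 2 * Tb m = m * (m + 1) := by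
  induction m with
  | zero => simp [Tb]
  | succ m ih => rw [Tb_succ]; ring_nf; ring_nf at ih; omega

lemma Tb_blk_le (k : ℕ) : Tb (blk k) ≤ k :=
  Nat.findGreatest_spec (P := fun m => Tb m ≤ k) (Nat.zero_le k) (by simp [Tb])

lemma blk_le (k : ℕ) : blk k ≤ k := Nat.findGreatest_le _

lemma lt_Tb_blk_succ (k : ℕ) : k < Tb (blk k + 1) := by
  by_cases h : blk k + 1 ≤ k
  · have := Nat.findGreatest_is_greatest (P := fun m => Tb m ≤ k) (n := k)
      (Nat.lt_succ_self (blk k)) h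
    rw [Nat.succ_eq_add_one] at this
    omega
  · have h2 := le_Tb (blk k + 1)
    omega

lemma blk_on_block (M j : ℕ) (hj : j ≤ M) : blk (Tb M + j) = M := by
  have h1 : M ≤ Tb M + j := le_trans (le_Tb M) (Nat.le_add_right _ _)
  apply Nat.findGreatest_eq_iff.mpr
  refine ⟨h1, fun _ => Nat.le_add_right _ _, fun m' hm' _ => ?_⟩
  have hmm : Tb (M + 1) ≤ Tb m' := Tb_mono hm'
  rw [Tb_succ] at hmm
  omega

lemma one_le_blk (k : ℕ) (hk : 1 ≤ k) : 1 ≤ blk k :=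
  Nat.le_findGreatest (P := fun m => Tb m ≤ k) hk (by simpa [Tb_succ, Tb] using hk)

lemma blk_tendsto : Tendsto blk atTop atTop :=
  tendsto_atTop_atTop.mpr fun b =>
    ⟨Tb b, fun m hm => Nat.le_findGreatest (P := fun m' => Tb m' ≤ m)
      (le_trans (le_Tb b) hm) hm⟩

lemma prefix_blocks (gN : ℕ → ℝ) (M : ℕ) :
    ∑ k ∈ Finset.range (Tb M), gN (ind n lam k)
      = ∑ b ∈ Finset.range M, ∑ j ∈ Finset.range (b + 1), gN (cls n lam (b + 1) j) := by
  induction M with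
  | zero => simp [Tb]
  | succ M ih =>
    rw [Finset.sum_range_succ, ← ih, Tb_succ, Finset.sum_range_add]
    congr 1
    apply Finset.sum_congr rfl
    intro j hj
    have hj' : j ≤ M := Nat.lt_succ_iff.mp (Finset.mem_range.mp hj)
    congr 1
    rw [ind, blk_on_block M j hj', Nat.add_sub_cancel_left]

lemma ind_lt (hn : 0 < n) (k : ℕ) : ind n lam k < n := cls_lt n lam hn _ _

lemma alloc_tendsto (hn : 0 < n) (hlam : ∀ i, 0 ≤ lam i) (hsum : ∑ i, lam i = 1)
    (gN : ℕ → ℝ) :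
    Tendsto (fun m : ℕ => (∑ k ∈ Finset.range m, gN (ind n lam k)) / m) atTop
      (nhds (∑ i ∈ Finset.range n, (Lamc n lam (i + 1) - Lamc n lam i) * gN i)) := by
  set c : ℝ := ∑ i ∈ Finset.range n, (Lamc n lam (i + 1) - Lamc n lam i) * gN i with hc
  set B : ℝ := ∑ i ∈ Finset.range n, |gN i| with hB
  have hB0 : 0 ≤ B := Finset.sum_nonneg fun i _ => abs_nonneg _
  have hgB : ∀ i < n, |gN i| ≤ B :=
    fun i hi => Finset.single_le_sum (fun i _ => abs_nonneg (gN i)) (Finset.mem_range.mpr hi)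
  have hcB : |c| ≤ B := by
    rw [hc, hB]
    refine le_trans (Finset.abs_sum_le_sum_abs _ _) (Finset.sum_le_sum ?_)
    intro i hi
    rw [abs_mul]
    have hnn : 0 ≤ Lamc n lam (i + 1) - Lamc n lam i :=
      sub_nonneg.mpr (Lamc_mono n lam hlam (Nat.le_succ i))
    have hle1 : Lamc n lam (i + 1) - Lamc n lam i ≤ 1 := by
      have h1 : Lamc n lam (i + 1) ≤ Lamc n lam n := by
        apply Lamc_mono n lam hlam
        exact Finset.mem_range.mp hi
      rw [Lamc_n n lam hsum] at h1
      have h2 : 0 ≤ Lamc n lam i := Lamc_nonneg n lam hlam i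
      linarith
    rw [abs_of_nonneg hnn]
    nlinarith [abs_nonneg (gN i)]
  -- boundary estimate
  have hbdry : ∀ M : ℕ, |∑ k ∈ Finset.range (Tb M), gN (ind n lam k) - (Tb M : ℝ) * c|
      ≤ M * B := by
    intro M
    rw [prefix_blocks n lam gN M]
    have hTb : ((Tb M : ℕ) : ℝ) = ∑ b ∈ Finset.range M, ((b : ℝ) + 1) := by
      rw [Tb]; push_cast
      exact Finset.sum_congr rfl fun _ _ => by ring
    rw [hTb, Finset.sum_mul, ← Finset.sum_sub_distrib]
    refine le_trans (Finset.abs_sum_le_sum_abs _ _) ?_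
    calc ∑ b ∈ Finset.range M, |∑ j ∈ Finset.range (b + 1), gN (cls n lam (b + 1) j)
          - ((b : ℝ) + 1) * c|
        ≤ ∑ _b ∈ Finset.range M, B := by
          apply Finset.sum_le_sum
          intro b _
          have := block_est n lam hn hlam hsum gN (b + 1)
          rw [← hc, ← hB] at this
          push_cast at this ⊢
          convert this using 2
      _ = M * B := by rw [Finset.sum_const, Finset.card_range, nsmul_eq_mul]
  -- full estimate
  have hfull : ∀ m : ℕ, |∑ k ∈ Finset.range m, gN (ind n lam k) - (m : ℝ) * c|
      ≤ 3 * (blk m) * B := by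
    intro m
    have h1 : Tb (blk m) ≤ m := Tb_blk_le m
    have h2 : m < Tb (blk m) + (blk m + 1) := by
      have := lt_Tb_blk_succ m
      rwa [Tb_succ] at this
    set M := blk m with hM
    set r := m - Tb M with hr
    have hrM : r ≤ M := by omega
    have hm_eq : m = Tb M + r := by omega
    have hsplit : ∑ k ∈ Finset.range m, gN (ind n lam k)
        = ∑ k ∈ Finset.range (Tb M), gN (ind n lam k)
          + ∑ j ∈ Finset.range r, gN (ind n lam (Tb M + j)) := by
      rw [hm_eq, Finset.sum_range_add]
    have hpart : |∑ j ∈ Finset.range r, gN (ind n lam (Tb M + j))| ≤ r * B := by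
      refine le_trans (Finset.abs_sum_le_sum_abs _ _) ?_
      calc ∑ j ∈ Finset.range r, |gN (ind n lam (Tb M + j))|
          ≤ ∑ _j ∈ Finset.range r, B := by
            apply Finset.sum_le_sum
            intro j _
            exact hgB _ (ind_lt n lam hn _)
        _ = r * B := by rw [Finset.sum_const, Finset.card_range, nsmul_eq_mul]
    have hmc : (m : ℝ) * c = (Tb M : ℝ) * c + r * c := by
      rw [hm_eq]; push_cast; ring
    rw [hsplit, hmc]
    have hb := hbdry M
    have hrc : |(r : ℝ) * c| ≤ r * B := by
      rw [abs_mul, abs_of_nonneg (by positivity : (0:ℝ) ≤ (r:ℝ))]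
      exact mul_le_mul_of_nonneg_left hcB (by positivity)
    have hrMR : (r : ℝ) ≤ (M : ℝ) := by exact_mod_cast hrM
    calc |∑ k ∈ Finset.range (Tb M), gN (ind n lam k)
          + ∑ j ∈ Finset.range r, gN (ind n lam (Tb M + j))
          - ((Tb M : ℝ) * c + r * c)|
        ≤ |∑ k ∈ Finset.range (Tb M), gN (ind n lam k) - (Tb M : ℝ) * c|
          + |∑ j ∈ Finset.range r, gN (ind n lam (Tb M + j))| + |(r : ℝ) * c| := by
          set X := ∑ k ∈ Finset.range (Tb M), gN (ind n lam k)
          set Y := ∑ j ∈ Finset.range r, gN (ind n lam (Tb M + j))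
          have he : X + Y - ((Tb M : ℝ) * c + (r : ℝ) * c)
              = (X - (Tb M : ℝ) * c) + (Y + (-((r : ℝ) * c))) := by ring
          rw [he]
          refine le_trans (abs_add_le _ _) ?_
          have h2 := abs_add_le Y (-((r : ℝ) * c))
          rw [abs_neg] at h2
          linarith
      _ ≤ M * B + r * B + r * B :=
          add_le_add (add_le_add hb hpart) hrc
      _ ≤ 3 * M * B := by nlinarith [mul_le_mul_of_nonneg_right hrMR hB0]
  -- conclude
  have hfinal : ∀ᶠ m : ℕ in atTop,
      ‖(∑ k ∈ Finset.range m, gN (ind n lam k)) / m - c‖ ≤ 6 * B / (blk m : ℝ) := by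
    filter_upwards [eventually_ge_atTop 1] with m hm
    have hM1 : 1 ≤ blk m := one_le_blk m hm
    have hMpos : (0:ℝ) < (blk m : ℝ) := by exact_mod_cast hM1
    have hmpos : (0:ℝ) < (m : ℝ) := by exact_mod_cast hm
    have h2m : ((blk m : ℝ)) * ((blk m : ℝ)) ≤ 2 * m := by
      have := two_Tb (blk m)
      have h1 := Tb_blk_le m
      have : blk m * blk m ≤ 2 * m := by nlinarith [two_Tb (blk m), Tb_blk_le m]
      exact_mod_cast this
    rw [Real.norm_eq_abs]
    have : (∑ k ∈ Finset.range m, gN (ind n lam k)) / m - c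
        = (∑ k ∈ Finset.range m, gN (ind n lam k) - m * c) / m := by
      field_simp
    rw [this, abs_div, abs_of_nonneg (le_of_lt hmpos)]
    rw [div_le_div_iff₀ hmpos hMpos]
    have hf := hfull m
    calc |∑ k ∈ Finset.range m, gN (ind n lam k) - (m:ℝ) * c| * (blk m : ℝ)
        ≤ (3 * (blk m) * B) * (blk m : ℝ) := by
          exact mul_le_mul_of_nonneg_right hf (le_of_lt hMpos)
      _ = 3 * B * ((blk m : ℝ) * (blk m : ℝ)) := by ring
      _ ≤ 3 * B * (2 * m) := by nlinarith
      _ = 6 * B * m := by ring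
  have hzero : Tendsto (fun m : ℕ => 6 * B / (blk m : ℝ)) atTop (nhds 0) :=
    (tendsto_const_div_atTop_nhds_zero_nat (6 * B)).comp blk_tendsto
  have hdiff : Tendsto (fun m : ℕ => (∑ k ∈ Finset.range m, gN (ind n lam k)) / m - c)
      atTop (nhds 0) := squeeze_zero_norm' hfinal hzero
  have := hdiff.add_const c
  simpa using this

end S19

/-- Lemma 5.5. For any `p₁,…,pₙ ∈ (0,1)` and any convex combination
`τ = ∑ᵢ λᵢ τ(pᵢ,·)` (`λᵢ ≥ 0`, `∑λᵢ = 1`) there is a sequence `(pₖ')` taking values in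
`{p₁,…,pₙ}` whose inhomogeneous Bernoulli product `μ` satisfies
`τ_{μ,m}(q) → τ(q)` for every `q ∈ ℝ`; in particular the `L^q`-spectrum of `μ` is `τ`. -/
theorem statement19
    (n : ℕ) (P : Fin n → ℝ) (hP : ∀ i, P i ∈ Set.Ioo (0 : ℝ) 1)
    (lam : Fin n → ℝ) (hlam : ∀ i, 0 ≤ lam i) (hsum : ∑ i, lam i = 1) :
    ∃ p' : ℕ → ℝ, (∀ k : ℕ, ∃ i : Fin n, p' k = P i) ∧
      ∃ μ : Measure (ℕ → Bool), IsBernoulliProduct p' μ ∧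
        (∀ q : ℝ,
          Tendsto (fun m : ℕ => tauN μ m q) atTop
            (nhds (∑ i, lam i * taup (P i) q))) ∧
        ∀ q : ℝ, tauLq μ q = ∑ i, lam i * taup (P i) q := by
  rcases Nat.eq_zero_or_pos n with hn0 | hn
  · subst hn0; simp at hsum
  set p' : ℕ → ℝ := fun k => P ⟨S19.ind n lam k, S19.ind_lt n lam hn k⟩ with hp'
  have hp'mem : ∀ k, p' k ∈ Set.Ioo (0:ℝ) 1 := fun k => hP _
  have hlog2 : Real.log 2 ≠ 0 := ne_of_gt (Real.log_pos one_lt_two)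
  have key : ∀ q : ℝ, Tendsto (fun m : ℕ => tauN (S19.bern p') m q) atTop
      (nhds (∑ i, lam i * taup (P i) q)) := by
    intro q
    set gN : ℕ → ℝ := fun j => if h : j < n then taup (P ⟨j, h⟩) q else 0 with hgN
    have hgNi : ∀ (i : ℕ) (h : i < n), gN i = taup (P ⟨i, h⟩) q := fun i h => dif_pos h
    have hsum_eq : ∑ i ∈ Finset.range n,
        (S19.Lamc n lam (i + 1) - S19.Lamc n lam i) * gN i
        = ∑ i, lam i * taup (P i) q := by
      have h1 : (∑ i, lam i * taup (P i) q)
          = ∑ i : Fin n, (fun j : ℕ =>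
              if h : j < n then lam ⟨j, h⟩ * taup (P ⟨j, h⟩) q else 0) (i : ℕ) :=
        Finset.sum_congr rfl fun i _ => by simp [i.isLt]
      rw [h1, Fin.sum_univ_eq_sum_range
        (fun j : ℕ => if h : j < n then lam ⟨j, h⟩ * taup (P ⟨j, h⟩) q else 0) n]
      apply Finset.sum_congr rfl
      intro i hi
      have hi' : i < n := Finset.mem_range.mp hi
      rw [S19.Lamc_succ n lam i hi', hgNi i hi']
      simp only [hi', dif_pos]
      ring
    have htau : ∀ m : ℕ, 1 ≤ m → tauN (S19.bern p') m q
        = (∑ k ∈ Finset.range m, gN (S19.ind n lam k)) / m := by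
      intro m hm
      have hmne : (m : ℝ) ≠ 0 := by positivity
      have hcyl : ∀ ε : Fin m → Bool, (S19.bern p' (cyl ε)).toReal = S19.wgt p' ε := by
        intro ε
        rw [S19.bern_cyl p' hp'mem ε,
          ENNReal.toReal_ofReal (le_of_lt (S19.wgt_pos p' hp'mem ε))]
      have hfac : ∀ k : ℕ, (0:ℝ) < (1 - p' k) ^ q + (p' k) ^ q := by
        intro k
        obtain ⟨h0, h1⟩ := hp'mem k
        have := Real.rpow_pos_of_pos h0 q
        have := Real.rpow_pos_of_pos (by linarith : (0:ℝ) < 1 - p' k) q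
        linarith
      have hsum1 : ∑ ε : Fin m → Bool, (S19.bern p' (cyl ε)).toReal ^ q
          = ∏ i : Fin m, ((1 - p' (i:ℕ)) ^ q + (p' (i:ℕ)) ^ q) := by
        have hstep : ∀ ε : Fin m → Bool, (S19.bern p' (cyl ε)).toReal ^ q
            = ∏ i : Fin m, (if ε i then 1 - p' (i:ℕ) else p' (i:ℕ)) ^ q := by
          intro ε
          rw [hcyl ε, S19.wgt, Real.finset_prod_rpow _ _ (fun i _ => by
            obtain ⟨h0, h1⟩ := hp'mem (i:ℕ)
            split <;> linarith) q]
        rw [Finset.sum_congr rfl fun ε _ => hstep ε]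
        have hps := Finset.prod_univ_sum (fun _ : Fin m => (Finset.univ : Finset Bool))
          (fun i b => (if b then 1 - p' (i:ℕ) else p' (i:ℕ)) ^ q)
        rw [Fintype.piFinset_univ] at hps
        rw [← hps]
        apply Finset.prod_congr rfl
        intro i _
        rw [Fintype.sum_bool]
        simp
      have hlogprod : Real.log (∏ i : Fin m, ((1 - p' (i:ℕ)) ^ q + (p' (i:ℕ)) ^ q))
          = ∑ i : Fin m, Real.log ((1 - p' (i:ℕ)) ^ q + (p' (i:ℕ)) ^ q) :=
        Real.log_prod fun i _ => ne_of_gt (hfac (i:ℕ))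
      have hterm : ∀ k : ℕ, Real.log ((1 - p' k) ^ q + (p' k) ^ q)
          = gN (S19.ind n lam k) * Real.log 2 := by
        intro k
        have h1 : Real.log ((1 - p' k) ^ q + (p' k) ^ q)
            = Real.log ((p' k) ^ q + (1 - p' k) ^ q) := by rw [add_comm]
        rw [h1, hgNi (S19.ind n lam k) (S19.ind_lt n lam hn k)]
        rw [taup]
        field_simp
        rfl
      have hconv : ∑ i : Fin m, Real.log ((1 - p' (i:ℕ)) ^ q + (p' (i:ℕ)) ^ q)
          = ∑ k ∈ Finset.range m, gN (S19.ind n lam k) * Real.log 2 := by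
        rw [← Fin.sum_univ_eq_sum_range
          (fun k => gN (S19.ind n lam k) * Real.log 2) m]
        exact Finset.sum_congr rfl fun i _ => hterm (i : ℕ)
      rw [tauN, hsum1, hlogprod, hconv, ← Finset.sum_mul]
      field_simp
    have halloc := S19.alloc_tendsto n lam hn hlam hsum gN
    rw [hsum_eq] at halloc
    apply halloc.congr'
    filter_upwards [eventually_ge_atTop 1] with m hm
    exact (htau m hm).symm
  refine ⟨p', fun k => ⟨_, rfl⟩, S19.bern p', ⟨S19.bern_prob p', ?_⟩, key, ?_⟩
  · intro m ε
    rw [S19.bern_cyl p' hp'mem ε, S19.wgt]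
  · intro q
    exact (key q).limsup_eq
end
end
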